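/- arXiv:1203.1893 — 9 statements merged into one kernel-verified Lean document; each statement's English description precedes it below -/
import Mathlib

section
/- In any associative ring, for all elements a, b, c, z the element [a, [b,c]z] + [b, [a,c]z] lies in L_3, the additive span of triple commutators [u, [v, w]]. Equivalently, the identity [a,[b,c]z] + [b,[a,c]z] = [[ab,c],z] - [[b,c],za] + [[b,[a,c]],z] - [[a,c],zb] holds. -/
/-- The commutator `[a,b] = a*b - b*a` in an associative ring. -/
def br {A : Type*} [Ring A] (a b : A) : A := a * b - b * a

/-- In any associative ring, `[a,[b,c]z] + [b,[a,c]z]` lies in `L_3`, the additive span of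
triple commutators, and equals `[[ab,c],z] - [[b,c],za] + [[b,[a,c]],z] - [[a,c],zb]`. -/
theorem stmt3 (A : Type*) [Ring A] (a b c z : A) :
    br a (br b c * z) + br b (br a c * z) ∈
      AddSubgroup.closure {u : A | ∃ x y w : A, u = br x (br y w)} ∧
    br a (br b c * z) + br b (br a c * z) =
      br (br (a * b) c) z - br (br b c) (z * a) + br (br b (br a c)) z - br (br a c) (z * b) := by
  have h : br a (br b c * z) + br b (br a c * z) =
      br (br (a * b) c) z - br (br b c) (z * a) + br (br b (br a c)) z - br (br a c) (z * b) := by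
    simp only [br]; noncomm_ring
  refine ⟨?_, h⟩
  have mem : ∀ x y w : A, br x (br y w) ∈
      AddSubgroup.closure {u : A | ∃ x y w : A, u = br x (br y w)} :=
    fun x y w => AddSubgroup.subset_closure ⟨x, y, w, rfl⟩
  have flip : ∀ x y : A, br x y = -br y x := by intro x y; simp only [br, neg_sub]
  rw [h, flip (br (a * b) c) z, flip (br b c) (z * a), flip (br a c) (z * b), flip (br b (br a c)) z]
  exact sub_mem (add_mem (sub_mem (neg_mem (mem _ _ _)) (neg_mem (mem _ _ _))) (neg_mem (mem _ _ _)))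
    (neg_mem (mem _ _ _))
end

section
/- In any associative ring, for all elements x, y, z the element [x,y][x,z] lies in M_3 = A·L_3, where L_3 is the additive span of triple commutators. Specifically, [x,y][x,z] = [[x,yx],z] - [[x,y],z]x. -/
/-- In any associative ring `A`, `[x,y][x,z] = [[x,yx],z] - [[x,y],z]x`, and in particular
`[x,y][x,z]` lies in `M_3 = A·L_3`, the additive span of (left multiples of) triple
commutators. -/
theorem stmt4 (A : Type*) [Ring A] (x y z : A) :
    br x y * br x z = br (br x (y * x)) z - br (br x y) z * x ∧
    br x y * br x z ∈
      AddSubgroup.closure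
        ({u : A | ∃ a p q r : A, u = a * br p (br q r)} ∪
         {u : A | ∃ p q r : A, u = br p (br q r)}) := by
  constructor
  · simp only [br]; noncomm_ring
  · have key : br x y * br x z =
        -(br z (br x (y * x))) + (x * br z (br x y) + br x (br (br x y) z)) := by
      simp only [br]; noncomm_ring
    rw [key]
    refine add_mem (neg_mem (AddSubgroup.subset_closure (Or.inr ⟨z, x, y * x, rfl⟩)))
      (add_mem (AddSubgroup.subset_closure (Or.inl ⟨x, z, x, y, rfl⟩))
        (AddSubgroup.subset_closure (Or.inr ⟨x, br x y, z, rfl⟩)))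
end

section
/- Let Z^N ⊇ A ⊇ B be abelian groups, p a prime, and suppose the quotient Z^N / A has no p-torsion. Let A_p and B_p denote the images of A and B in F_p^N = Z^N ⊗ F_p. Then the natural map A_p / B_p → (A/B) ⊗ F_p is an isomorphism. -/
/-- Componentwise reduction `ℤ^N → (ℤ/p)^N`. -/
def redMap (N p : ℕ) : (Fin N → ℤ) →+ (Fin N → ZMod p) where
  toFun v i := (v i : ZMod p)
  map_zero' := by funext i; simp
  map_add' a b := by funext i; simp

section Aux

variable (N p : ℕ) (A B : AddSubgroup (Fin N → ℤ))

/-- The map `A → A_p`. -/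
def toAp : ↥A →+ ↥(A.map (redMap N p)) where
  toFun a := ⟨redMap N p a, AddSubgroup.mem_map_of_mem _ a.2⟩
  map_zero' := by ext i; simp
  map_add' a b := by ext i; simp [redMap]; rfl

/-- The map `A → A_p / B_p`. -/
def phiMap : ↥A →+
    (↥(A.map (redMap N p)) ⧸ (B.map (redMap N p)).addSubgroupOf (A.map (redMap N p))) :=
  (QuotientAddGroup.mk' _).comp (toAp N p A)

/-- The map `A → (A/B) ⊗ ZMod p`, `a ↦ [a] ⊗ 1`. -/
noncomputable def chiMap : ↥A →+ TensorProduct ℤ (↥A ⧸ B.addSubgroupOf A) (ZMod p) :=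
  (((TensorProduct.mk ℤ (↥A ⧸ B.addSubgroupOf A) (ZMod p)).flip 1).toAddMonoidHom).comp
    (QuotientAddGroup.mk' _)

@[simp] lemma phiMap_apply (a : ↥A) :
    phiMap N p A B a = QuotientAddGroup.mk (toAp N p A a) := rfl

@[simp] lemma chiMap_apply (a : ↥A) :
    chiMap N p A B a =
      TensorProduct.tmul ℤ (QuotientAddGroup.mk a : ↥A ⧸ B.addSubgroupOf A) (1 : ZMod p) := rfl

end Aux

/-- Lift `x ⊗ c ↦ c • g x` for a `ZMod p`-module target. -/
noncomputable def liftSmul {p : ℕ} {Q M : Type*} [AddCommGroup Q] [AddCommGroup M] [Module (ZMod p) M]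
    (g : Q →+ M) : TensorProduct ℤ Q (ZMod p) →+ M :=
  (TensorProduct.lift (σ₁₂ := RingHom.id ℤ)
    { toFun := fun m =>
        { toFun := fun c => c • g m
          map_add' := fun c d => add_smul c d (g m)
          map_smul' := fun z c => by
            simp only [zsmul_eq_mul, RingHom.id_apply]
            rw [← Int.cast_smul_eq_zsmul (ZMod p) z (c • g m), ← mul_smul, mul_comm] }
      map_add' := fun m m' => by
        ext c
        simp [smul_add]
      map_smul' := fun z m => by
        ext c
        simp only [LinearMap.coe_mk, AddHom.coe_mk, RingHom.id_apply, LinearMap.smul_apply]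
        rw [map_zsmul, ← Int.cast_smul_eq_zsmul (ZMod p) z (g m), ← mul_smul, mul_comm,
          mul_smul, Int.cast_smul_eq_zsmul] }).toAddMonoidHom

@[simp] lemma liftSmul_tmul {p : ℕ} {Q M : Type*} [AddCommGroup Q] [AddCommGroup M]
    [Module (ZMod p) M] (g : Q →+ M) (m : Q) (c : ZMod p) :
    liftSmul g (m ⊗ₜ c) = c • g m := rfl

/-- Let `ℤ^N ⊇ A ⊇ B` be abelian groups, `p` prime, and suppose `ℤ^N/A` has no
`p`-torsion.  Then the natural map `A_p/B_p → (A/B) ⊗ F_p` (sending the class of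
`a mod p` to the class of `a ⊗ 1`) is an isomorphism, where `A_p`, `B_p` are the images
of `A`, `B` in `F_p^N`. -/
theorem stmt8 (N p : ℕ) (hp : p.Prime) (A B : AddSubgroup (Fin N → ℤ)) (hBA : B ≤ A)
    (htf : ∀ v : Fin N → ℤ, (p : ℤ) • v ∈ A → v ∈ A) :
    ∃ e : (↥(A.map (redMap N p)) ⧸ (B.map (redMap N p)).addSubgroupOf (A.map (redMap N p))) ≃+
        TensorProduct ℤ (↥A ⧸ B.addSubgroupOf A) (ZMod p),
      ∀ a : ↥A,
        e (QuotientAddGroup.mk ⟨redMap N p a, AddSubgroup.mem_map_of_mem _ a.2⟩) =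
          TensorProduct.tmul ℤ
            (QuotientAddGroup.mk a : ↥A ⧸ B.addSubgroupOf A) (1 : ZMod p) := by
  haveI : NeZero p := ⟨hp.ne_zero⟩
  set φ := phiMap N p A B with hφdef
  set χ := chiMap N p A B with hχdef
  -- characterization of the kernel of φ
  have hker : ∀ a : ↥A, φ a = 0 ↔
      ∃ b ∈ B, ∃ w ∈ A, (a : Fin N → ℤ) = b + (p : ℤ) • w := by
    intro a
    rw [phiMap_apply, QuotientAddGroup.eq_zero_iff]
    constructor
    · rintro h
      have h' : redMap N p a ∈ B.map (redMap N p) := h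
      obtain ⟨b, hb, hred⟩ := h'
      have hdvd : ∀ i, (p : ℤ) ∣ ((a : Fin N → ℤ) i - b i) := by
        intro i
        rw [← ZMod.intCast_zmod_eq_zero_iff_dvd]
        push_cast
        have := congrFun hred i
        simp only [redMap, AddMonoidHom.coe_mk, ZeroHom.coe_mk] at this
        rw [this]; ring
      refine ⟨b, hb, fun i => ((a : Fin N → ℤ) i - b i) / p, ?_, ?_⟩
      · apply htf
        have : ((p : ℤ) • fun i => ((a : Fin N → ℤ) i - b i) / p) =
            (a : Fin N → ℤ) - b := by
          funext i
          simp only [Pi.smul_apply, smul_eq_mul]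
          exact Int.mul_ediv_cancel' (hdvd i)
        rw [this]
        exact sub_mem a.2 (hBA hb)
      · funext i
        simp only [Pi.add_apply, Pi.smul_apply, smul_eq_mul]
        rw [Int.mul_ediv_cancel' (hdvd i)]
        ring
    · rintro ⟨b, hb, w, hw, heq⟩
      show redMap N p a ∈ B.map (redMap N p)
      refine ⟨b, hb, ?_⟩
      funext i
      simp only [redMap, AddMonoidHom.coe_mk, ZeroHom.coe_mk, heq, Pi.add_apply,
        Pi.smul_apply, smul_eq_mul]
      push_cast
      simp [ZMod.natCast_self]
  -- φ is surjective
  have hsurj : Function.Surjective φ := by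
    intro x
    induction x using QuotientAddGroup.induction_on with
    | H y =>
      obtain ⟨v, hv⟩ := y
      obtain ⟨a, ha, hred⟩ := hv
      refine ⟨⟨a, ha⟩, ?_⟩
      have h : toAp N p A ⟨a, ha⟩ = ⟨v, ⟨a, ha, hred⟩⟩ := Subtype.ext hred
      rw [hφdef, phiMap_apply, h]
  -- p-torsion of A ⧸ ker φ
  have htor : ∀ x : (↥A ⧸ φ.ker), p • x = 0 := by
    intro x
    induction x using QuotientAddGroup.induction_on with
    | H a =>
      rw [← QuotientAddGroup.mk_nsmul, QuotientAddGroup.eq_zero_iff]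
      show φ (p • a) = 0
      rw [(hker _)]
      refine ⟨0, B.zero_mem, a, a.2, ?_⟩
      simp [natCast_zsmul]
  letI : Module (ZMod p) (↥A ⧸ φ.ker) := AddCommGroup.zmodModule htor
  -- the map A/B → A/ker φ
  have hBker : ∀ x : ↥A, x ∈ B.addSubgroupOf A → x ∈ φ.ker := by
    intro x hx
    rw [AddMonoidHom.mem_ker, hker]
    exact ⟨x, hx, 0, A.zero_mem, by simp⟩
  set g : (↥A ⧸ B.addSubgroupOf A) →+ (↥A ⧸ φ.ker) :=
    QuotientAddGroup.map _ _ (AddMonoidHom.id _) hBker with hgdef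
  have hg : ∀ a : ↥A, g (QuotientAddGroup.mk a) = QuotientAddGroup.mk a := fun a => rfl
  set θ : TensorProduct ℤ (↥A ⧸ B.addSubgroupOf A) (ZMod p) →+ (↥A ⧸ φ.ker) :=
    liftSmul g with hθdef
  -- ker φ ≤ ker χ
  have hkerχ : ∀ a : ↥A, a ∈ φ.ker → χ a = 0 := by
    intro a ha
    rw [AddMonoidHom.mem_ker, hker] at ha
    obtain ⟨b, hb, w, hw, heq⟩ := ha
    have ha' : a = ⟨b, hBA hb⟩ + (p : ℤ) • ⟨w, hw⟩ := by
      apply Subtype.ext; simp [heq]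
    rw [ha', map_add, map_zsmul]
    have h1 : χ ⟨b, hBA hb⟩ = 0 := by
      rw [hχdef, chiMap_apply]
      have : (QuotientAddGroup.mk (⟨b, hBA hb⟩ : ↥A) : ↥A ⧸ B.addSubgroupOf A) = 0 := by
        rw [QuotientAddGroup.eq_zero_iff]; exact hb
      rw [this, TensorProduct.zero_tmul]
    have h2 : (p : ℤ) • χ ⟨w, hw⟩ = 0 := by
      rw [hχdef, chiMap_apply, ← TensorProduct.tmul_smul]
      norm_num
    rw [h1, h2, add_zero]
  set χbar : (↥A ⧸ φ.ker) →+ TensorProduct ℤ (↥A ⧸ B.addSubgroupOf A) (ZMod p) :=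
    QuotientAddGroup.lift _ χ hkerχ with hχbardef
  have hχbar : ∀ a : ↥A, χbar (QuotientAddGroup.mk a) = χ a := fun a => rfl
  -- the two maps are inverse
  have hleft : ∀ x, θ (χbar x) = x := by
    intro x
    induction x using QuotientAddGroup.induction_on with
    | H a =>
      rw [hχbar, hχdef, chiMap_apply, hθdef, liftSmul_tmul, one_smul, hg]
  have hright : ∀ t, χbar (θ t) = t := by
    intro t
    induction t using TensorProduct.induction_on with
    | zero => simp
    | add x y hx hy => rw [map_add, map_add, hx, hy]
    | tmul m c =>
      induction m using QuotientAddGroup.induction_on with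
      | H a =>
        rw [hθdef, liftSmul_tmul, hg]
        conv_lhs => rw [← (ZMod.natCast_rightInverse (n := p) c : ((c.val : ℕ) : ZMod p) = c),
          Nat.cast_smul_eq_nsmul]
        rw [map_nsmul, hχbar, hχdef, chiMap_apply, ← Nat.cast_smul_eq_nsmul ℤ c.val,
          ← TensorProduct.tmul_smul]
        congr 1
        simp [ZMod.natCast_rightInverse c]
  set e2 : (↥A ⧸ φ.ker) ≃+ TensorProduct ℤ (↥A ⧸ B.addSubgroupOf A) (ZMod p) :=
    { toFun := χbar, invFun := θ, left_inv := hleft, right_inv := hright,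
      map_add' := χbar.map_add }
  refine ⟨(QuotientAddGroup.quotientKerEquivOfSurjective φ hsurj).symm.trans e2, ?_⟩
  intro a
  have h1 : (QuotientAddGroup.mk (⟨redMap N p a, AddSubgroup.mem_map_of_mem _ a.2⟩ :
      ↥(A.map (redMap N p)))) = φ a := rfl
  have h2 : (QuotientAddGroup.quotientKerEquivOfSurjective φ hsurj).symm (φ a) =
      QuotientAddGroup.mk a := by
    rw [AddEquiv.symm_apply_eq]
    rfl
  rw [AddEquiv.trans_apply, h1, h2]
  exact hχbar a
end

section
/- In the free associative ring A_2 = Z⟨x,y⟩ on two generators, let q, r be positive integers, d = gcd(q,r). Define f̂ = sum_{i=0}^{q/d - 1} x^i y^{r/d} (x^{q/d} y^{r/d})^{d-1} x^{q/d - 1 - i} and ĝ = sum_{i=0}^{r/d - 1} y^i (x^{q/d} y^{r/d})^{d-1} x^{q/d} y^{r/d - 1 - i}. Then [x, f̂] + [y, ĝ] = 0 in A_2. -/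
/-- In the free associative ring `ℤ⟨x,y⟩`, with `d = gcd(q,r)`,
`f̂ = ∑_{i<q/d} x^i y^{r/d} (x^{q/d} y^{r/d})^{d-1} x^{q/d-1-i}` and
`ĝ = ∑_{i<r/d} y^i (x^{q/d} y^{r/d})^{d-1} x^{q/d} y^{r/d-1-i}` satisfy
`[x, f̂] + [y, ĝ] = 0`. -/
theorem stmt9 (q r : ℕ) (hq : 0 < q) (hr : 0 < r) :
    let d := Nat.gcd q r
    let x := FreeAlgebra.ι ℤ (0 : Fin 2)
    let y := FreeAlgebra.ι ℤ (1 : Fin 2)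
    let f := ∑ i ∈ Finset.range (q / d),
      x ^ i * y ^ (r / d) * (x ^ (q / d) * y ^ (r / d)) ^ (d - 1) * x ^ (q / d - 1 - i)
    let g := ∑ i ∈ Finset.range (r / d),
      y ^ i * (x ^ (q / d) * y ^ (r / d)) ^ (d - 1) * x ^ (q / d) * y ^ (r / d - 1 - i)
    (x * f - f * x) + (y * g - g * y) = 0 := by
  intro d x y f g
  have hd : 0 < d := Nat.gcd_pos_of_pos_left r hq
  set a := q / d with ha'
  set b := r / d with hb'
  set w := (x ^ a * y ^ b) ^ (d - 1) with hw
  have hF : x * f - f * x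
      = ∑ i ∈ Finset.range a,
        ((fun i => x ^ i * y ^ b * w * x ^ (a - i)) (i + 1)
          - (fun i => x ^ i * y ^ b * w * x ^ (a - i)) i) := by
    rw [show x * f - f * x
        = ∑ i ∈ Finset.range a,
          (x * (x ^ i * y ^ b * w * x ^ (a - 1 - i))
            - x ^ i * y ^ b * w * x ^ (a - 1 - i) * x) by
      simp [f, Finset.mul_sum, Finset.sum_mul, Finset.sum_sub_distrib]; rfl]
    refine Finset.sum_congr rfl fun i hi => ?_
    have hi' : i < a := Finset.mem_range.mp hi
    have h1 : a - 1 - i = a - (i + 1) := by omega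
    have h2 : a - 1 - i + 1 = a - i := by omega
    simp only [h1]
    congr 1
    · rw [← mul_assoc, ← mul_assoc, ← mul_assoc, ← pow_succ']
    · have h3 : a - (i + 1) + 1 = a - i := by omega
      rw [mul_assoc, ← pow_succ, h3]
  have hG : y * g - g * y
      = ∑ i ∈ Finset.range b,
        ((fun i => y ^ i * w * x ^ a * y ^ (b - i)) (i + 1)
          - (fun i => y ^ i * w * x ^ a * y ^ (b - i)) i) := by
    rw [show y * g - g * y
        = ∑ i ∈ Finset.range b,
          (y * (y ^ i * w * x ^ a * y ^ (b - 1 - i))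
            - y ^ i * w * x ^ a * y ^ (b - 1 - i) * y) by
      simp [g, Finset.mul_sum, Finset.sum_mul, Finset.sum_sub_distrib]; rfl]
    refine Finset.sum_congr rfl fun i hi => ?_
    have hi' : i < b := Finset.mem_range.mp hi
    have h1 : b - 1 - i = b - (i + 1) := by omega
    have h2 : b - 1 - i + 1 = b - i := by omega
    simp only [h1]
    congr 1
    · rw [← mul_assoc, ← mul_assoc, ← mul_assoc, ← pow_succ']
    · have h3 : b - (i + 1) + 1 = b - i := by omega
      rw [mul_assoc, ← pow_succ, h3]
  rw [hF, hG, Finset.sum_range_sub (fun i => x ^ i * y ^ b * w * x ^ (a - i)) a,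
    Finset.sum_range_sub (fun i => y ^ i * w * x ^ a * y ^ (b - i)) b]
  have hcomm : x ^ a * y ^ b * w = w * (x ^ a * y ^ b) := by
    rw [hw, ← pow_succ', ← pow_succ]
  have hd1 : d - 1 + 1 = d := by omega
  simp only [pow_zero, one_mul, Nat.sub_zero, Nat.sub_self, mul_one]
  rw [← mul_assoc] at hcomm
  rw [hcomm]
  abel
end

section
/- In the free associative ring A_n = Z⟨x_1,...,x_n⟩, let m_1, ..., m_n be positive integers, d = gcd(m_1,...,m_n). For each i define f̂_i = sum_{j=0}^{m_i/d - 1} x_i^j x_{i+1}^{m_{i+1}/d} ⋯ x_n^{m_n/d} (x_1^{m_1/d} ⋯ x_n^{m_n/d})^{d-1} x_1^{m_1/d} ⋯ x_{i-1}^{m_{i-1}/d} x_i^{m_i/d - j - 1}. Then sum_{i=1}^n [x_i, f̂_i] = 0. -/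
private lemma aux_filter_ge : ∀ (n t : ℕ),
    (List.finRange n).filter (fun l => decide (t ≤ l.val)) = (List.finRange n).drop t
  | 0, t => by simp
  | n+1, 0 => by simp
  | n+1, t+1 => by
    rw [List.finRange_succ, List.filter_cons, List.filter_map, List.drop_succ_cons]
    have h : ((fun l : Fin (n+1) => decide (t+1 ≤ l.val)) ∘ Fin.succ)
        = (fun l : Fin n => decide (t ≤ l.val)) := by
      funext l; simp [Fin.val_succ, Nat.succ_le_succ_iff]
    rw [h, aux_filter_ge n t, List.map_drop]
    simp

private lemma aux_filter_lt : ∀ (n t : ℕ),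
    (List.finRange n).filter (fun l => decide (l.val < t)) = (List.finRange n).take t
  | 0, t => by simp
  | n+1, 0 => by simp
  | n+1, t+1 => by
    rw [List.finRange_succ, List.filter_cons, List.filter_map]
    have h : ((fun l : Fin (n+1) => decide (l.val < t+1)) ∘ Fin.succ)
        = (fun l : Fin n => decide (l.val < t)) := by
      funext l; simp [Fin.val_succ, Nat.succ_lt_succ_iff]
    rw [h, aux_filter_lt n t, List.map_take]
    simp

set_option maxHeartbeats 1600000 in
/-- In the free associative ring `ℤ⟨x_1,...,x_n⟩`, with `d = gcd(m_1,...,m_n)` and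
`f̂_i = ∑_{j<m_i/d} x_i^j (∏_{l>i} x_l^{m_l/d}) (∏_l x_l^{m_l/d})^{d-1}
(∏_{l<i} x_l^{m_l/d}) x_i^{m_i/d-j-1}`, one has `∑_i [x_i, f̂_i] = 0`. -/
theorem stmt10 (n : ℕ) (m : Fin n → ℕ) (hm : ∀ i, 0 < m i) :
    let d := Finset.univ.gcd m
    let x : Fin n → FreeAlgebra ℤ (Fin n) := FreeAlgebra.ι ℤ
    let P := ((List.finRange n).map (fun l => x l ^ (m l / d))).prod
    let f : Fin n → FreeAlgebra ℤ (Fin n) := fun i => ∑ j ∈ Finset.range (m i / d),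
      x i ^ j *
        (((List.finRange n).filter (fun l => i < l)).map (fun l => x l ^ (m l / d))).prod *
        P ^ (d - 1) *
        (((List.finRange n).filter (fun l => l < i)).map (fun l => x l ^ (m l / d))).prod *
        x i ^ (m i / d - j - 1)
    ∑ i : Fin n, (x i * f i - f i * x i) = 0 := by
  intro d x P f
  set xp : Fin n → FreeAlgebra ℤ (Fin n) := fun l => x l ^ (m l / d) with hxp
  set Q : FreeAlgebra ℤ (Fin n) := P ^ (d - 1) with hQ
  set U : ℕ → FreeAlgebra ℤ (Fin n) :=
    fun t => (((List.finRange n).drop t).map xp).prod with hU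
  set V : ℕ → FreeAlgebra ℤ (Fin n) :=
    fun t => (((List.finRange n).take t).map xp).prod with hV
  have hsummand : ∀ i : Fin n, x i * f i - f i * x i =
      U i.val * Q * V i.val - U (i.val + 1) * Q * V (i.val + 1) := by
    intro i
    -- identify the two filtered products
    have hA : (((List.finRange n).filter (fun l => i < l)).map xp).prod = U (i.val + 1) := by
      simp only [hU]
      congr 2
      rw [← aux_filter_ge n (i.val + 1)]
      refine List.filter_congr (fun a _ => ?_)
      simp only [decide_eq_decide, Fin.lt_def]
      omega
    have hB : (((List.finRange n).filter (fun l => l < i)).map xp).prod = V i.val := by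
      simp only [hV]
      congr 2
      rw [← aux_filter_lt n i.val]
      refine List.filter_congr (fun a _ => ?_)
      simp only [decide_eq_decide, Fin.lt_def]
    have hilt : (i : ℕ) < (List.finRange n).length := by simp [i.isLt]
    have hUsplit : U i.val = xp i * U (i.val + 1) := by
      simp only [hU]
      rw [List.drop_eq_getElem_cons hilt, List.map_cons, List.prod_cons]
      congr 2
      simp [List.getElem_finRange]
    have hVsplit : V (i.val + 1) = V i.val * xp i := by
      simp only [hV]
      rw [List.take_succ]
      have h' : (List.finRange n)[(i : ℕ)]? = some i := by
        rw [List.getElem?_eq_getElem hilt]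
        simp [List.getElem_finRange]
      rw [h']
      simp
    set c : FreeAlgebra ℤ (Fin n) := U (i.val + 1) * Q * V i.val with hc
    have hf : f i = ∑ j ∈ Finset.range (m i / d), x i ^ j * c * x i ^ (m i / d - j - 1) := by
      show (∑ j ∈ Finset.range (m i / d),
        x i ^ j *
          (((List.finRange n).filter (fun l => i < l)).map (fun l => x l ^ (m l / d))).prod *
          P ^ (d - 1) *
          (((List.finRange n).filter (fun l => l < i)).map (fun l => x l ^ (m l / d))).prod *
          x i ^ (m i / d - j - 1)) = _
      refine Finset.sum_congr rfl fun j _ => ?_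
      rw [show (fun l => x l ^ (m l / d)) = xp from rfl, hA, hB, ← hQ, hc]
      simp [mul_assoc]
    have hin : x i * f i - f i * x i = x i ^ (m i / d) * c - c * x i ^ (m i / d) := by
      rw [hf, Finset.mul_sum, Finset.sum_mul, ← Finset.sum_sub_distrib]
      calc ∑ j ∈ Finset.range (m i / d),
            (x i * (x i ^ j * c * x i ^ (m i / d - j - 1))
              - x i ^ j * c * x i ^ (m i / d - j - 1) * x i)
          = ∑ j ∈ Finset.range (m i / d),
            ((fun j => x i ^ j * c * x i ^ (m i / d - j)) (j + 1)
              - (fun j => x i ^ j * c * x i ^ (m i / d - j)) j) := by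
            refine Finset.sum_congr rfl fun j hj => ?_
            rw [Finset.mem_range] at hj
            show _ = x i ^ (j + 1) * c * x i ^ (m i / d - (j + 1))
              - x i ^ j * c * x i ^ (m i / d - j)
            have e1 : m i / d - (j + 1) = m i / d - j - 1 := by omega
            have e2 : m i / d - j - 1 + 1 = m i / d - j := by omega
            rw [e1]
            congr 1
            · rw [← mul_assoc, ← mul_assoc, ← pow_succ']
            · rw [mul_assoc, mul_assoc, ← pow_succ, e2, ← mul_assoc]
        _ = (fun j => x i ^ j * c * x i ^ (m i / d - j)) (m i / d)
              - (fun j => x i ^ j * c * x i ^ (m i / d - j)) 0 :=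
            by exact Finset.sum_range_sub (fun j => x i ^ j * c * x i ^ (m i / d - j)) (m i / d)
        _ = x i ^ (m i / d) * c - c * x i ^ (m i / d) := by simp
    rw [hin]
    have hxK : x i ^ (m i / d) = xp i := rfl
    rw [hxK, hUsplit, hVsplit, hc]
    simp [mul_assoc]
  calc ∑ i : Fin n, (x i * f i - f i * x i)
      = ∑ i : Fin n, (U (i : ℕ) * Q * V (i : ℕ) - U ((i : ℕ) + 1) * Q * V ((i : ℕ) + 1)) :=
        Finset.sum_congr rfl fun i _ => hsummand i
    _ = ∑ t ∈ Finset.range n, (U t * Q * V t - U (t + 1) * Q * V (t + 1)) :=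
        by exact Fin.sum_univ_eq_sum_range (fun t => U t * Q * V t - U (t + 1) * Q * V (t + 1)) n
    _ = U 0 * Q * V 0 - U n * Q * V n := Finset.sum_range_sub' _ n
    _ = 0 := by
        have h0 : U 0 = P := by simp [hU]; rfl
        have h1 : V 0 = 1 := by simp [hV]
        have h2 : U n = 1 := by simp [hU, List.drop_eq_nil_of_le]
        have h3 : V n = P := by
          simp only [hV]
          rw [List.take_of_length_le (by simp)]
        rw [h0, h1, h2, h3, mul_one, one_mul, hQ, sub_eq_zero]
        exact ((Commute.refl P).pow_right (d - 1)).eq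
end

section
/- Let y_1, ..., y_n be generators of an exterior algebra over Z (y_i y_j = -y_j y_i, y_i^2 = 0). Let j_1, ..., j_M be a sequence of indices from {1,...,n}, and let m_i be the number of occurrences of i in the sequence. Then (1 + y_{j_1})(1 + y_{j_2})⋯(1 + y_{j_M}) = (1 + m_1 y_1 + ... + m_n y_n) · prod_{1 ≤ r < s ≤ M} (1 + y_{j_r} y_{j_s}). -/
open ExteriorAlgebra

private lemma key11 {A : Type*} [Ring A] (a b : A) (ha : a*a = 0) (hb : b*b = 0)
    (hba : b*a = -(a*b)) : (1+a)*(1+b) = (1+(a+b))*(1+a*b) := by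
  have h1 : a*(a*b) = 0 := by rw [← mul_assoc, ha, zero_mul]
  have h2 : b*(a*b) = 0 := by rw [← mul_assoc, hba, neg_mul, mul_assoc, hb, mul_zero, neg_zero]
  simp only [mul_add, add_mul, one_mul, mul_one, h1, h2, add_zero]
  abel

variable {n : ℕ}

private lemma swap11 (v w : Fin n → ℤ) :
    ι ℤ v * ι ℤ w = -(ι ℤ w * ι ℤ v) := by
  exact eq_neg_of_add_eq_zero_left (ι_add_mul_swap v w)

private lemma inner11 (w : Fin n → ℤ) (t : List (Fin n → ℤ)) :
    (t.map (fun v => 1 + ι ℤ w * ι ℤ v)).prod = 1 + ι ℤ w * ι ℤ t.sum := by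
  induction t with
  | nil => simp
  | cons v t ih =>
      rw [List.map_cons, List.prod_cons, ih, List.sum_cons, map_add]
      have h : ι ℤ w * ι ℤ v * (ι ℤ w * ι ℤ t.sum) = 0 := by
        rw [mul_assoc, ← mul_assoc (ι ℤ v), swap11 v w, neg_mul, mul_neg, ← mul_assoc, ← mul_assoc,
          ι_sq_zero, zero_mul, zero_mul, neg_zero]
      simp only [mul_add, add_mul, one_mul, mul_one, h, add_zero, mul_add]
      abel

private noncomputable def Q11 (n : ℕ) : List (Fin n → ℤ) → ExteriorAlgebra ℤ (Fin n → ℤ)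
  | [] => 1
  | v :: t => (1 + ι ℤ v * ι ℤ t.sum) * Q11 n t

private lemma main11 (t : List (Fin n → ℤ)) :
    (t.map (fun v => 1 + ι ℤ v)).prod = (1 + ι ℤ t.sum) * Q11 n t := by
  induction t with
  | nil => simp [Q11]
  | cons v t ih =>
      rw [List.map_cons, List.prod_cons, ih, ← mul_assoc, List.sum_cons, map_add, Q11,
        ← mul_assoc]
      congr 1
      exact key11 _ _ (ι_sq_zero v) (ι_sq_zero t.sum) (swap11 t.sum v)


private lemma K11 (M : ℕ) (j : Fin M → (Fin n → ℤ)) (K : List (Fin M))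
    (hK : K.Pairwise (· < ·)) :
    (K.map (fun r => ((K.filter (fun s => r < s)).map
      (fun s => 1 + ι ℤ (j r) * ι ℤ (j s))).prod)).prod = Q11 n (K.map j) := by
  induction K with
  | nil => simp [Q11]
  | cons r K ih =>
      rw [List.pairwise_cons] at hK
      obtain ⟨h1, h2⟩ := hK
      rw [List.map_cons, List.prod_cons, List.map_cons, Q11]
      have hf : (r :: K).filter (fun s => r < s) = K := by
        rw [List.filter_cons_of_neg (by simp), List.filter_eq_self.mpr]
        intro a ha; simpa using h1 a ha
      have hhead : ((((r :: K).filter (fun s => r < s)).map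
          (fun s => 1 + ι ℤ (j r) * ι ℤ (j s))).prod)
          = 1 + ι ℤ (j r) * ι ℤ (K.map j).sum := by
        rw [hf, ← inner11 (j r) (K.map j), List.map_map]; rfl
      rw [hhead]
      congr 1
      rw [← ih h2]
      apply congrArg List.prod
      apply List.map_congr_left
      intro a ha
      have hcf : (r :: K).filter (fun s => a < s) = K.filter (fun s => a < s) := by
        rw [List.filter_cons_of_neg (by simpa using (h1 a ha).asymm)]
      rw [hcf]

/-- In the exterior algebra over `ℤ` on anticommuting generators `y_1,...,y_n`, for any
sequence of indices `j_1,...,j_M` with `m_i` occurrences of `i`,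
`(1+y_{j_1})⋯(1+y_{j_M}) = (1 + m_1 y_1 + ... + m_n y_n) · ∏_{r<s} (1 + y_{j_r} y_{j_s})`
(the latter product taken in any fixed order, its factors being even, hence commuting). -/
theorem stmt11 (n M : ℕ) (j : Fin M → Fin n) :
    let y : Fin n → ExteriorAlgebra ℤ (Fin n → ℤ) :=
      fun i => ExteriorAlgebra.ι ℤ (Pi.single i 1)
    ((List.finRange M).map (fun k => 1 + y (j k))).prod =
      (1 + ∑ i : Fin n, ((Finset.univ.filter (fun k => j k = i)).card) • y i) *
        ((List.finRange M).map (fun r =>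
          (((List.finRange M).filter (fun s => r < s)).map
            (fun s => 1 + y (j r) * y (j s))).prod)).prod := by
  intro y
  set f : Fin n → (Fin n → ℤ) := fun i => Pi.single i 1 with hfdef
  set L : List (Fin n → ℤ) := (List.finRange M).map (fun k => f (j k)) with hL
  have hlhs : ((List.finRange M).map (fun k => 1 + y (j k))).prod
      = (L.map (fun v => 1 + ι ℤ v)).prod := by
    rw [hL, List.map_map]; rfl
  have hq : ((List.finRange M).map (fun r =>
      (((List.finRange M).filter (fun s => r < s)).map
        (fun s => 1 + y (j r) * y (j s))).prod)).prod = Q11 n L := by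
    have := K11 M (fun k => f (j k)) (List.finRange M) (List.pairwise_lt_finRange M)
    rw [← this]
  have hsum : (∑ i : Fin n, ((Finset.univ.filter (fun k => j k = i)).card) • y i)
      = ι ℤ L.sum := by
    have h1 : ι ℤ L.sum = ((L.map (ι ℤ)).sum : ExteriorAlgebra ℤ (Fin n → ℤ)) :=
      map_list_sum (ι ℤ).toAddMonoidHom L
    rw [h1, hL, List.map_map]
    have h2 : (((List.finRange M).map ((ι ℤ) ∘ fun k => f (j k))).sum :
        ExteriorAlgebra ℤ (Fin n → ℤ)) = ∑ k : Fin M, y (j k) := by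
      rw [Fin.sum_univ_def]; rfl
    rw [h2, Finset.sum_comp (fun i => y i) j]
    refine (Finset.sum_subset (Finset.subset_univ _) ?_).symm
    intro i _ hi
    have : (Finset.univ.filter (fun k => j k = i)) = ∅ := by
      ext k; simp only [Finset.mem_filter, Finset.mem_univ, true_and, Finset.notMem_empty,
        iff_false]
      intro hk
      exact hi (Finset.mem_image.mpr ⟨k, Finset.mem_univ k, hk⟩)
    rw [this]; simp
  rw [hlhs, hq, hsum, main11]
end

section
/- In the free associative algebra A = F⟨x,y⟩ over a commutative ring F, consider the multidegree-(m,1) component A[m,1], with basis {x^i y x^j : i + j = m}. Under the identification x^i y x^j ↦ z^i with polynomials in F[z] of degree at most m, bracketing with x^l (the map P ↦ [x^l, P̃] where P̃ is the element corresponding to P) corresponds to multiplication by (z^l - 1). Consequently, L_{i+1}(A)[m,1] corresponds to the set of polynomials of degree ≤ m divisible by (z-1)^i, and for F = Z, each quotient B_{i+1}(A)[m,1] = L_{i+1}(A)[m,1]/L_{i+2}(A)[m,1] is isomorphic to Z for 0 ≤ i ≤ m and 0 for i > m; in particular it is torsion-free. -/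
/-- The lower central series: `lcs F A k = L_{k+1}(A)`, so `lcs F A 0 = L_1 = A` and
`lcs F A (k+1) = [A, lcs F A k]` (the `F`-span of commutators). -/
def lcs (F : Type*) [CommRing F] (A : Type*) [Ring A] [Algebra F A] : ℕ → Submodule F A
  | 0 => ⊤
  | k + 1 => Submodule.span F {u : A | ∃ a : A, ∃ l ∈ lcs F A k, u = a * l - l * a}

/-- The identification of `F[z]_{≤ m}` with the multidegree-`(m,1)` component of
`F⟨x,y⟩`: `z^i ↦ x^i y x^{m-i}`. -/
noncomputable def phi (F : Type*) [CommRing F] (m : ℕ) (P : Polynomial F) :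
    FreeAlgebra F (Fin 2) :=
  ∑ i ∈ Finset.range (m + 1),
    P.coeff i • ((FreeAlgebra.ι F (0 : Fin 2)) ^ i * FreeAlgebra.ι F (1 : Fin 2) *
      (FreeAlgebra.ι F (0 : Fin 2)) ^ (m - i))

/-- The multidegree-`(m,1)` component of `ℤ⟨x,y⟩`, spanned by `x^i y x^j`, `i+j = m`. -/
def comp2 (m : ℕ) : Submodule ℤ (FreeAlgebra ℤ (Fin 2)) :=
  Submodule.span ℤ {u : FreeAlgebra ℤ (Fin 2) | ∃ i j : ℕ, i + j = m ∧
    u = (FreeAlgebra.ι ℤ (0 : Fin 2)) ^ i * FreeAlgebra.ι ℤ (1 : Fin 2) *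
      (FreeAlgebra.ι ℤ (0 : Fin 2)) ^ j}

noncomputable section AuxSec
open Polynomial

variable (F : Type*) [CommRing F]

/-- Representation x ↦ diag(X,1), y ↦ E₁₂. -/
def psiA : FreeAlgebra F (Fin 2) →ₐ[F] Matrix (Fin 2) (Fin 2) (Polynomial F) :=
  FreeAlgebra.lift F ![Matrix.diagonal ![X, 1], !![0, 1; 0, 0]]

lemma psiA_x : psiA F (FreeAlgebra.ι F 0) = Matrix.diagonal ![X, 1] := by
  simp [psiA]

lemma psiA_y : psiA F (FreeAlgebra.ι F 1) = !![0, 1; 0, 0] := by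
  simp [psiA]

lemma psiA_xpow (k : ℕ) : psiA F (FreeAlgebra.ι F 0 ^ k) = Matrix.diagonal ![X ^ k, 1] := by
  rw [map_pow, psiA_x, Matrix.diagonal_pow]
  ext i j
  fin_cases i <;> fin_cases j <;> simp [Matrix.diagonal, Pi.pow_apply]

lemma psiA_word (k j : ℕ) :
    psiA F (FreeAlgebra.ι F 0 ^ k * FreeAlgebra.ι F 1 * FreeAlgebra.ι F 0 ^ j) =
      !![0, X ^ k; 0, 0] := by
  rw [map_mul, map_mul, psiA_xpow, psiA_y, psiA_xpow]
  ext i j'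
  fin_cases i <;> fin_cases j' <;>
    simp [Matrix.mul_apply, Fin.sum_univ_two, Matrix.diagonal]

lemma psiA_struct (a : FreeAlgebra F (Fin 2)) :
    psiA F a 1 0 = 0 ∧ (X - 1 : Polynomial F) ∣ (psiA F a 0 0 - psiA F a 1 1) := by
  induction a using FreeAlgebra.induction with
  | grade0 r =>
      simp [AlgHom.commutes, Matrix.algebraMap_matrix_apply]
  | grade1 i =>
      fin_cases i
      · rw [show (⟨0, by omega⟩ : Fin 2) = 0 from rfl, psiA_x]
        refine ⟨by simp [Matrix.diagonal], ?_⟩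
        simp [Matrix.diagonal]
      · rw [show (⟨1, by omega⟩ : Fin 2) = 1 from rfl, psiA_y]
        simp
  | mul a b ha hb =>
      obtain ⟨ha0, hadvd⟩ := ha
      obtain ⟨hb0, hbdvd⟩ := hb
      rw [map_mul]
      constructor
      · simp [Matrix.mul_apply, Fin.sum_univ_two, ha0, hb0]
      · have h : (psiA F a * psiA F b) 0 0 - (psiA F a * psiA F b) 1 1 =
            psiA F a 0 0 * (psiA F b 0 0 - psiA F b 1 1) +
            (psiA F a 0 0 - psiA F a 1 1) * psiA F b 1 1 := by
          simp [Matrix.mul_apply, Fin.sum_univ_two, ha0, hb0]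
          ring
        rw [h]
        exact dvd_add (hbdvd.mul_left _) (hadvd.mul_right _)
  | add a b ha hb =>
      obtain ⟨ha0, hadvd⟩ := ha
      obtain ⟨hb0, hbdvd⟩ := hb
      rw [map_add]
      refine ⟨by simp [Matrix.add_apply, ha0, hb0], ?_⟩
      have h : (psiA F a + psiA F b) 0 0 - (psiA F a + psiA F b) 1 1 =
          (psiA F a 0 0 - psiA F a 1 1) + (psiA F b 0 0 - psiA F b 1 1) := by
        simp [Matrix.add_apply]; ring
      rw [h]
      exact dvd_add hadvd hbdvd



lemma lcs_psiA : ∀ (i : ℕ) (a : FreeAlgebra F (Fin 2)),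
    a ∈ lcs F (FreeAlgebra F (Fin 2)) i →
    ((X - 1 : Polynomial F) ^ i ∣ psiA F a 0 1) ∧
      (i ≠ 0 → psiA F a 0 0 = 0 ∧ psiA F a 1 1 = 0) := by
  intro i
  induction i with
  | zero => intro a _; exact ⟨by simp, fun h => absurd rfl h⟩
  | succ i ih =>
      intro a ha
      have ha' : a ∈ Submodule.span F {u : FreeAlgebra F (Fin 2) |
          ∃ b : FreeAlgebra F (Fin 2), ∃ l ∈ lcs F (FreeAlgebra F (Fin 2)) i,
            u = b * l - l * b} := ha
      refine Submodule.span_induction ?_ ?_ ?_ ?_ ha'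
      · rintro u ⟨b, l, hl, rfl⟩
        obtain ⟨hdvdL, hdiagL⟩ := ih l hl
        obtain ⟨hb10, hbdvd⟩ := psiA_struct F b
        obtain ⟨hl10, hldvd⟩ := psiA_struct F l
        rw [map_sub, map_mul, map_mul]
        constructor
        · have h01 : (psiA F b * psiA F l - psiA F l * psiA F b) 0 1 =
              psiA F l 0 1 * (psiA F b 0 0 - psiA F b 1 1) -
                psiA F b 0 1 * (psiA F l 0 0 - psiA F l 1 1) := by
            simp [Matrix.sub_apply, Matrix.mul_apply, Fin.sum_univ_two]
            ring
          rw [h01, pow_succ]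
          refine dvd_sub (mul_dvd_mul hdvdL hbdvd) ?_
          rcases Nat.eq_zero_or_pos i with hi | hi
          · subst hi
            simpa [pow_succ] using (hldvd.mul_left (psiA F b 0 1))
          · have h0 := hdiagL (by omega)
            rw [h0.1, h0.2]
            simp
        · intro _
          constructor
          · simp [Matrix.sub_apply, Matrix.mul_apply, Fin.sum_univ_two, hb10, hl10]
            ring
          · simp [Matrix.sub_apply, Matrix.mul_apply, Fin.sum_univ_two, hb10, hl10]
            ring
      · simp
      · rintro u v _ _ ⟨hu1, hu2⟩ ⟨hv1, hv2⟩
        rw [map_add]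
        refine ⟨by simpa [Matrix.add_apply] using dvd_add hu1 hv1, fun h => ?_⟩
        obtain ⟨a1, a2⟩ := hu2 h
        obtain ⟨b1, b2⟩ := hv2 h
        simp [Matrix.add_apply, a1, a2, b1, b2]
      · rintro c u _ ⟨hu1, hu2⟩
        rw [map_smul]
        refine ⟨?_, fun h => ?_⟩
        · rw [Matrix.smul_apply, Polynomial.smul_eq_C_mul]
          exact hu1.mul_left _
        · obtain ⟨a1, a2⟩ := hu2 h
          simp [Matrix.smul_apply, a1, a2]



lemma phi_add (m : ℕ) (P Q : Polynomial F) :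
    phi F m (P + Q) = phi F m P + phi F m Q := by
  simp [phi, add_smul, Finset.sum_add_distrib]

lemma phi_smul (m : ℕ) (c : F) (P : Polynomial F) :
    phi F m (c • P) = c • phi F m P := by
  simp [phi, Finset.smul_sum, smul_smul]

lemma phi_sub (m : ℕ) (P Q : Polynomial F) :
    phi F m (P - Q) = phi F m P - phi F m Q := by
  simp [phi, sub_smul, Finset.sum_sub_distrib]

lemma phi_zero (m : ℕ) : phi F m 0 = 0 := by simp [phi]

lemma phi_Xpow (m k : ℕ) (h : k ≤ m) :
    phi F m (X ^ k) =
      FreeAlgebra.ι F (0 : Fin 2) ^ k * FreeAlgebra.ι F (1 : Fin 2) *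
        FreeAlgebra.ι F (0 : Fin 2) ^ (m - k) := by
  rw [phi]
  rw [Finset.sum_eq_single k]
  · simp [coeff_X_pow]
  · intro b _ hbk
    simp [coeff_X_pow, hbk]
  · intro hk
    exact absurd (Finset.mem_range.mpr (by omega)) hk

lemma psiA_phi (m : ℕ) (P : Polynomial F) (h : P.natDegree ≤ m) :
    psiA F (phi F m P) 0 1 = P := by
  rw [phi, map_sum, Matrix.sum_apply]
  have : ∀ k ∈ Finset.range (m + 1),
      (psiA F (P.coeff k • (FreeAlgebra.ι F (0 : Fin 2) ^ k * FreeAlgebra.ι F (1 : Fin 2) *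
        FreeAlgebra.ι F (0 : Fin 2) ^ (m - k)))) 0 1 = monomial k (P.coeff k) := by
    intro k _
    rw [map_smul, Matrix.smul_apply, psiA_word]
    simp [smul_X_eq_monomial]
  rw [Finset.sum_congr rfl this]
  exact (P.as_sum_range' (m + 1) (Nat.lt_succ_of_le h)).symm

lemma bracket_mono (l m k : ℕ) (h : k ≤ m) :
    FreeAlgebra.ι F (0 : Fin 2) ^ l * phi F m (X ^ k) -
      phi F m (X ^ k) * FreeAlgebra.ι F (0 : Fin 2) ^ l =
    phi F (m + l) ((X ^ l - 1) * (X ^ k : Polynomial F)) := by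
  have hrhs : ((X ^ l - 1) * (X ^ k) : Polynomial F) = X ^ (k + l) - X ^ k := by
    ring
  rw [hrhs, phi_sub, phi_Xpow F (m + l) (k + l) (by omega),
    phi_Xpow F (m + l) k (by omega), phi_Xpow F m k h,
    (by omega : m + l - (k + l) = m - k), (by omega : m + l - k = (m - k) + l),
    (by omega : k + l = l + k), pow_add, pow_add]
  noncomm_ring

lemma bracket (l m : ℕ) (P : Polynomial F) (h : P.natDegree ≤ m) :
    FreeAlgebra.ι F (0 : Fin 2) ^ l * phi F m P - phi F m P * FreeAlgebra.ι F (0 : Fin 2) ^ l =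
      phi F (m + l) ((X ^ l - 1) * P) := by
  conv_lhs => rw [P.as_sum_range' (m + 1) (Nat.lt_succ_of_le h)]
  conv_rhs => rw [P.as_sum_range' (m + 1) (Nat.lt_succ_of_le h)]
  rw [Finset.mul_sum]
  have hphisum : ∀ (M : ℕ) (f : ℕ → Polynomial F),
      phi F M (∑ k ∈ Finset.range (m + 1), f k) =
        ∑ k ∈ Finset.range (m + 1), phi F M (f k) := by
    intro M f
    induction (Finset.range (m + 1)) using Finset.induction_on with
    | empty => simp [phi_zero]
    | insert _ _ hx ih => rw [Finset.sum_insert hx, Finset.sum_insert hx, phi_add, ih]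
  rw [hphisum, hphisum, Finset.mul_sum, Finset.sum_mul, ← Finset.sum_sub_distrib]
  refine Finset.sum_congr rfl ?_
  intro k hk
  have hk' : k ≤ m := by simpa [Nat.lt_succ_iff] using hk
  rw [← smul_X_eq_monomial, phi_smul, mul_smul_comm, smul_mul_assoc, ← smul_sub,
    bracket_mono F l m k hk', mul_smul_comm, phi_smul]

lemma phi_mem_lcs : ∀ (i m : ℕ) (P : Polynomial F), P.natDegree ≤ m →
    (X - 1 : Polynomial F) ^ i ∣ P → phi F m P ∈ lcs F (FreeAlgebra F (Fin 2)) i := by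
  intro i
  induction i with
  | zero => intro m P _ _; exact Submodule.mem_top
  | succ i ih =>
      intro m P hdeg hdvd
      by_cases hP : P = 0
      · rw [hP, phi_zero]
        exact Submodule.zero_mem _
      obtain ⟨Q, hQ⟩ := hdvd
      set R : Polynomial F := (X - 1) ^ i * Q with hR
      have hPR : P = (X - 1) * R := by rw [hQ, hR]; ring
      have hRne : R ≠ 0 := fun h => hP (by rw [hPR, h, mul_zero])
      have hmonic : ((X : Polynomial F) - 1).Monic := by
        have := Polynomial.monic_X_sub_C (1 : F)
        simpa using this
      have hFnt : Nontrivial F := by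
        rcases subsingleton_or_nontrivial F with hs | hn
        · exact absurd (Subsingleton.elim P 0) hP
        · exact hn
      have hdegP : P.natDegree = 1 + R.natDegree := by
        rw [hPR, hmonic.natDegree_mul' hRne]
        congr 1
        have := Polynomial.natDegree_X_sub_C (1 : F)
        simpa using this
      have hm1 : 1 ≤ m := by omega
      have hdegR : R.natDegree ≤ m - 1 := by omega
      have hmem : phi F (m - 1) R ∈ lcs F (FreeAlgebra F (Fin 2)) i :=
        ih (m - 1) R hdegR ⟨Q, rfl⟩
      have hb := bracket F 1 (m - 1) R hdegR
      rw [(by omega : m - 1 + 1 = m), pow_one] at hb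
      have hPeq : ((X : Polynomial F) ^ 1 - 1) * R = P := by rw [pow_one, hPR]
      rw [hPeq] at hb
      rw [← hb]
      show _ ∈ Submodule.span F {u : FreeAlgebra F (Fin 2) |
          ∃ a : FreeAlgebra F (Fin 2), ∃ l ∈ lcs F (FreeAlgebra F (Fin 2)) i,
            u = a * l - l * a}
      exact Submodule.subset_span ⟨FreeAlgebra.ι F (0 : Fin 2), phi F (m - 1) R, hmem, rfl⟩

lemma partB (i m : ℕ) (P : Polynomial F) (hdeg : P.natDegree ≤ m) :
    phi F m P ∈ lcs F (FreeAlgebra F (Fin 2)) i ↔ (X - 1 : Polynomial F) ^ i ∣ P := by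
  constructor
  · intro h
    have := (lcs_psiA F i (phi F m P) h).1
    rwa [psiA_phi F m P hdeg] at this
  · exact phi_mem_lcs F i m P hdeg



def piL : FreeAlgebra ℤ (Fin 2) →ₗ[ℤ] Polynomial ℤ where
  toFun a := psiA ℤ a 0 1
  map_add' a b := by
    show psiA ℤ (a + b) 0 1 = psiA ℤ a 0 1 + psiA ℤ b 0 1
    rw [map_add]; simp [Matrix.add_apply]
  map_smul' c a := by
    show psiA ℤ (c • a) 0 1 = (RingHom.id ℤ) c • psiA ℤ a 0 1
    rw [map_smul]; simp [Matrix.smul_apply]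

lemma piL_word (i j : ℕ) :
    piL (FreeAlgebra.ι ℤ (0 : Fin 2) ^ i * FreeAlgebra.ι ℤ (1 : Fin 2) *
      FreeAlgebra.ι ℤ (0 : Fin 2) ^ j) = X ^ i := by
  show psiA ℤ _ 0 1 = X ^ i
  rw [psiA_word]
  simp

lemma phi_mem_comp2 (m : ℕ) (P : Polynomial ℤ) : phi ℤ m P ∈ comp2 m := by
  refine Submodule.sum_mem _ ?_
  intro k hk
  refine Submodule.smul_mem _ _ (Submodule.subset_span ?_)
  exact ⟨k, m - k, by simp only [Finset.mem_range] at hk; omega, rfl⟩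

lemma comp2_eq (m : ℕ) : ∀ a ∈ comp2 m, a = phi ℤ m (piL a) ∧ (piL a).natDegree ≤ m := by
  intro a ha
  refine Submodule.span_induction ?_ ?_ ?_ ?_ ha
  · rintro u ⟨i, j, hij, rfl⟩
    rw [piL_word]
    constructor
    · rw [phi_Xpow ℤ m i (by omega), (by omega : m - i = j)]
    · simpa using (by omega : i ≤ m)
  · simp [phi_zero]
  · rintro u v hu hv ⟨hu1, hu2⟩ ⟨hv1, hv2⟩
    rw [map_add, phi_add]
    exact ⟨by rw [← hu1, ← hv1],
      le_trans (natDegree_add_le _ _) (max_le hu2 hv2)⟩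
  · rintro c u hu ⟨hu1, hu2⟩
    rw [map_smul, phi_smul]
    exact ⟨by rw [← hu1]; rfl, le_trans (natDegree_smul_le _ _) hu2⟩

lemma dvd_comp (j : ℕ) (P : Polynomial ℤ) :
    (X - 1 : Polynomial ℤ) ^ j ∣ P ↔ (X : Polynomial ℤ) ^ j ∣ P.comp (X + 1) := by
  constructor
  · rintro ⟨Q, rfl⟩
    refine ⟨Q.comp (X + 1), ?_⟩
    rw [mul_comp, pow_comp, sub_comp, X_comp, one_comp]
    ring_nf
  · rintro ⟨S, hS⟩
    have hPc : P = (P.comp (X + 1)).comp (X - 1) := by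
      rw [comp_assoc, add_comp, X_comp, one_comp]
      have h1 : (X - 1 + 1 : Polynomial ℤ) = X := by ring
      rw [h1, comp_X]
    refine ⟨S.comp (X - 1), ?_⟩
    rw [hPc, hS, mul_comp, pow_comp, X_comp]

def gL (i : ℕ) : FreeAlgebra ℤ (Fin 2) →ₗ[ℤ] ℤ where
  toFun a := ((piL a).comp (X + 1)).coeff i
  map_add' a b := by
    show ((piL (a + b)).comp (X + 1)).coeff i = _
    rw [map_add, add_comp, coeff_add]
  map_smul' c a := by
    show ((piL (c • a)).comp (X + 1)).coeff i = _
    rw [map_smul, smul_comp, coeff_smul, smul_eq_mul, RingHom.id_apply, smul_eq_mul]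

lemma ker_aux (i m : ℕ) (a : FreeAlgebra ℤ (Fin 2))
    (ha : a ∈ lcs ℤ (FreeAlgebra ℤ (Fin 2)) i ⊓ comp2 m) :
    (gL i a = 0 ↔ a ∈ lcs ℤ (FreeAlgebra ℤ (Fin 2)) (i + 1) ⊓ comp2 m) := by
  obtain ⟨haL, haC⟩ := ha
  obtain ⟨haeq, hadeg⟩ := comp2_eq m a haC
  have hdvd : (X - 1 : Polynomial ℤ) ^ i ∣ piL a := by
    rw [haeq] at haL
    exact (partB ℤ i m (piL a) hadeg).1 haL
  obtain ⟨S, hS⟩ := (dvd_comp i (piL a)).1 hdvd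
  have hg : gL i a = S.coeff 0 := by
    show ((piL a).comp (X + 1)).coeff i = S.coeff 0
    rw [hS]
    simpa using Polynomial.coeff_X_pow_mul S i 0
  constructor
  · intro h0
    have hXS : (X : Polynomial ℤ) ∣ S := X_dvd_iff.mpr (by rw [← hg]; exact h0)
    obtain ⟨T, hT⟩ := hXS
    have hdvd1 : (X - 1 : Polynomial ℤ) ^ (i + 1) ∣ piL a := by
      rw [dvd_comp, hS, hT]
      exact ⟨T, by ring⟩
    refine ⟨?_, haC⟩
    rw [haeq]
    exact phi_mem_lcs ℤ (i + 1) m _ hadeg hdvd1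
  · rintro ⟨hmem, -⟩
    have hdvd1 : (X - 1 : Polynomial ℤ) ^ (i + 1) ∣ piL a := by
      rw [haeq] at hmem
      exact (partB ℤ (i + 1) m _ hadeg).1 hmem
    obtain ⟨S', hS'⟩ := (dvd_comp (i + 1) _).1 hdvd1
    have hcan : S = X * S' := by
      have h2 : (X : Polynomial ℤ) ^ i * S = X ^ i * (X * S') := by
        rw [← hS, hS']; ring
      exact mul_left_cancel₀ (pow_ne_zero i X_ne_zero) h2
    rw [hg, hcan, mul_coeff_zero]
    simp


lemma natDegree_Xsub1_pow (i : ℕ) : ((X - 1 : Polynomial ℤ) ^ i).natDegree = i := by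
  rw [natDegree_pow]
  have h1 : ((X : Polynomial ℤ) - 1).natDegree = 1 := by
    simpa using natDegree_X_sub_C (1 : ℤ)
  rw [h1, mul_one]

lemma partC_ker (i m : ℕ) :
    LinearMap.ker ((gL i).comp (lcs ℤ (FreeAlgebra ℤ (Fin 2)) i ⊓ comp2 m).subtype) =
      Submodule.comap (lcs ℤ (FreeAlgebra ℤ (Fin 2)) i ⊓ comp2 m).subtype
        (lcs ℤ (FreeAlgebra ℤ (Fin 2)) (i + 1) ⊓ comp2 m) := by
  ext ⟨a, ha⟩
  simp only [LinearMap.mem_ker, LinearMap.comp_apply, Submodule.subtype_apply,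
    Submodule.mem_comap]
  exact ker_aux i m a ha

lemma partC_surj (i m : ℕ) (him : i ≤ m) :
    Function.Surjective ((gL i).comp (lcs ℤ (FreeAlgebra ℤ (Fin 2)) i ⊓ comp2 m).subtype) := by
  set P0 : Polynomial ℤ := (X - 1) ^ i with hP0
  have hdeg : P0.natDegree ≤ m := by rw [hP0, natDegree_Xsub1_pow]; exact him
  have ha0 : phi ℤ m P0 ∈ lcs ℤ (FreeAlgebra ℤ (Fin 2)) i ⊓ comp2 m :=
    ⟨phi_mem_lcs ℤ i m P0 hdeg dvd_rfl, phi_mem_comp2 m P0⟩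
  have hval : gL i (phi ℤ m P0) = 1 := by
    show ((piL (phi ℤ m P0)).comp (X + 1)).coeff i = 1
    have hpi : piL (phi ℤ m P0) = P0 := psiA_phi ℤ m P0 hdeg
    rw [hpi, hP0, pow_comp, sub_comp, X_comp, one_comp,
      (by ring : ((X : Polynomial ℤ) + 1 - 1) = X)]
    simp [coeff_X_pow]
  intro c
  refine ⟨c • ⟨phi ℤ m P0, ha0⟩, ?_⟩
  rw [map_smul]
  show c • gL i (phi ℤ m P0) = c
  rw [hval, smul_eq_mul, mul_one]

lemma partC_iso (i m : ℕ) (him : i ≤ m) :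
    Nonempty ((↥(lcs ℤ (FreeAlgebra ℤ (Fin 2)) i ⊓ comp2 m) ⧸
        Submodule.comap (lcs ℤ (FreeAlgebra ℤ (Fin 2)) i ⊓ comp2 m).subtype
          (lcs ℤ (FreeAlgebra ℤ (Fin 2)) (i + 1) ⊓ comp2 m)) ≃+ ℤ) :=
  ⟨((Submodule.quotEquivOfEq _ _ (partC_ker i m).symm).trans
    (((gL i).comp (lcs ℤ (FreeAlgebra ℤ (Fin 2)) i ⊓ comp2 m).subtype).quotKerEquivOfSurjective
      (partC_surj i m him))).toAddEquiv⟩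

lemma partC_bot (i m : ℕ) (him : m < i) :
    ∀ a ∈ lcs ℤ (FreeAlgebra ℤ (Fin 2)) i ⊓ comp2 m, a = 0 := by
  rintro a ⟨haL, haC⟩
  obtain ⟨haeq, hadeg⟩ := comp2_eq m a haC
  have hdvd : (X - 1 : Polynomial ℤ) ^ i ∣ piL a := by
    rw [haeq] at haL
    exact (partB ℤ i m _ hadeg).1 haL
  have hP0 : piL a = 0 := by
    by_contra h
    have hle := natDegree_le_of_dvd hdvd h
    rw [natDegree_Xsub1_pow] at hle
    omega
  rw [haeq, hP0, phi_zero]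

lemma partC_subsingleton (i m : ℕ) (him : m < i) :
    Subsingleton (↥(lcs ℤ (FreeAlgebra ℤ (Fin 2)) i ⊓ comp2 m) ⧸
      Submodule.comap (lcs ℤ (FreeAlgebra ℤ (Fin 2)) i ⊓ comp2 m).subtype
        (lcs ℤ (FreeAlgebra ℤ (Fin 2)) (i + 1) ⊓ comp2 m)) := by
  constructor
  intro q1 q2
  obtain ⟨x, rfl⟩ := Submodule.Quotient.mk_surjective _ q1
  obtain ⟨y, rfl⟩ := Submodule.Quotient.mk_surjective _ q2
  have hxy : x = y := by
    apply Subtype.ext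
    rw [partC_bot i m him x.1 x.2, partC_bot i m him y.1 y.2]
  rw [hxy]

end AuxSec

/-- In `A = F⟨x,y⟩`: (a) under the identification `x^i y x^j ↦ z^i` of the `(m,1)`-component
with polynomials of degree `≤ m`, bracketing with `x^l` corresponds to multiplication by
`z^l - 1`; (b) `L_{i+1}(A)[m,1]` corresponds to the polynomials of degree `≤ m` divisible by
`(z-1)^i`; (c) for `F = ℤ`, `B_{i+1}(A)[m,1] = L_{i+1}[m,1]/L_{i+2}[m,1]` is isomorphic to
`ℤ` for `0 ≤ i ≤ m`, is `0` for `i > m`, and in particular is torsion-free. -/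
theorem stmt14 (F : Type*) [CommRing F] :
    (∀ (l m : ℕ) (P : Polynomial F), P.natDegree ≤ m →
      FreeAlgebra.ι F (0 : Fin 2) ^ l * phi F m P - phi F m P * FreeAlgebra.ι F (0 : Fin 2) ^ l =
        phi F (m + l) ((Polynomial.X ^ l - 1) * P)) ∧
    (∀ (i m : ℕ) (P : Polynomial F), P.natDegree ≤ m →
      (phi F m P ∈ lcs F (FreeAlgebra F (Fin 2)) i ↔ (Polynomial.X - 1) ^ i ∣ P)) ∧
    (∀ i m : ℕ,
      (i ≤ m →
        Nonempty
          ((↥(lcs ℤ (FreeAlgebra ℤ (Fin 2)) i ⊓ comp2 m) ⧸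
              Submodule.comap (lcs ℤ (FreeAlgebra ℤ (Fin 2)) i ⊓ comp2 m).subtype
                (lcs ℤ (FreeAlgebra ℤ (Fin 2)) (i + 1) ⊓ comp2 m)) ≃+ ℤ)) ∧
      (m < i →
        Subsingleton
          (↥(lcs ℤ (FreeAlgebra ℤ (Fin 2)) i ⊓ comp2 m) ⧸
            Submodule.comap (lcs ℤ (FreeAlgebra ℤ (Fin 2)) i ⊓ comp2 m).subtype
              (lcs ℤ (FreeAlgebra ℤ (Fin 2)) (i + 1) ⊓ comp2 m))) ∧
      (∀ (q : ↥(lcs ℤ (FreeAlgebra ℤ (Fin 2)) i ⊓ comp2 m) ⧸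
            Submodule.comap (lcs ℤ (FreeAlgebra ℤ (Fin 2)) i ⊓ comp2 m).subtype
              (lcs ℤ (FreeAlgebra ℤ (Fin 2)) (i + 1) ⊓ comp2 m)) (c : ℤ),
        c • q = 0 → c = 0 ∨ q = 0)) := by
  refine ⟨fun l m P h => bracket F l m P h, fun i m P h => partB F i m P h, fun i m => ?_⟩
  refine ⟨fun him => partC_iso i m him, fun him => partC_subsingleton i m him, ?_⟩
  intro q c hcq
  rcases le_or_gt i m with him | him
  · obtain ⟨e⟩ := partC_iso i m him
    have h1 : c • e q = 0 := by rw [← map_zsmul e c q, hcq, map_zero]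
    rw [smul_eq_mul] at h1
    rcases mul_eq_zero.mp h1 with h | h
    · exact Or.inl h
    · refine Or.inr (e.injective ?_)
      rw [h, map_zero]
  · haveI := partC_subsingleton i m him
    exact Or.inr (Subsingleton.elim q 0)
end

section
/- In the free associative ring A_3 = Z⟨x,y,z⟩, for positive integers s, q, r, the element T(s,q,r) = [z, z^{s-1} x^{q-1} y^{r-1} [x,y]], viewed in B_2 = L_2/L_3, satisfies gcd(s,q,r) · T(s,q,r) ∈ L_3(A_3). In particular, T(s,q,r) is a torsion element of B_2(A_3(Z)) of order dividing gcd(s,q,r). -/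
set_option maxHeartbeats 1000000

namespace Stmt16Aux

variable {R : Type*} [Ring R] (N : AddSubgroup R)

/-- The bracket `[a,b]` viewed in the quotient `R ⧸ N`. -/
def bq (a b : R) : R ⧸ N := QuotientAddGroup.mk' N (a * b - b * a)

variable (hgen : ∀ a b c : R, a * (b * c - c * b) - (b * c - c * b) * a ∈ N)

include hgen in
lemma mk_gen (a b c : R) :
    QuotientAddGroup.mk' N (a * (b * c - c * b) - (b * c - c * b) * a) = 0 := by
  have h : a * (b * c - c * b) - (b * c - c * b) * a ∈ (QuotientAddGroup.mk' N).ker := by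
    rw [QuotientAddGroup.ker_mk']; exact hgen a b c
  rwa [AddMonoidHom.mem_ker] at h

include hgen in
lemma bq_rot (a u v : R) : bq N a (u * v) = bq N a (v * u) := by
  have h2 : bq N a (u * v) - bq N a (v * u) = 0 := by
    unfold bq
    rw [← map_sub]
    have h : a * (u * v) - u * v * a - (a * (v * u) - v * u * a)
        = a * (u * v - v * u) - (u * v - v * u) * a := by noncomm_ring
    rw [h]
    exact mk_gen N hgen a u v
  exact sub_eq_zero.mp h2

lemma bq_split (u v w : R) : bq N (u * v) w = bq N u (v * w) + bq N v (w * u) := by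
  unfold bq
  rw [← map_add]
  congr 1
  noncomm_ring

lemma bq_neg_right (a u : R) : bq N a (-u) = - bq N a u := by
  unfold bq
  rw [← map_neg]
  congr 1
  noncomm_ring

lemma bq_one (u : R) : bq N 1 u = 0 := by
  unfold bq
  have h : (1 : R) * u - u * 1 = 0 := by noncomm_ring
  rw [h, map_zero]

include hgen in
lemma bq_swap (a w u v : R) :
    bq N a (w * (u * v - v * u)) = - bq N w (a * (u * v - v * u)) := by
  rw [eq_neg_iff_add_eq_zero]
  unfold bq
  rw [← map_add]
  have h : a * (w * (u * v - v * u)) - w * (u * v - v * u) * a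
        + (w * (a * (u * v - v * u)) - a * (u * v - v * u) * w)
      = (w * (a * (u * v - v * u) - (u * v - v * u) * a)
          - (a * (u * v - v * u) - (u * v - v * u) * a) * w)
        + (a * w * (u * v - v * u) - (u * v - v * u) * (a * w)) := by noncomm_ring
  rw [h, map_add, mk_gen N hgen w a (u * v - v * u), mk_gen N hgen (a * w) u v, add_zero]

include hgen in
lemma bq_core (a b w : R) : bq N a (w * (a * b - b * a)) = 0 := by
  unfold bq
  have h : a * (w * (a * b - b * a)) - w * (a * b - b * a) * a
      = -(w * (a * (b * a) - b * a * a) - (a * (b * a) - b * a * a) * w)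
        + (b * (a * (a * w) - a * w * a) - (a * (a * w) - a * w * a) * b)
        - (a * (b * (a * w) - a * w * b) - (b * (a * w) - a * w * b) * a) := by noncomm_ring
  rw [h, map_sub, map_add, map_neg, mk_gen N hgen w a (b * a), mk_gen N hgen b a (a * w),
    mk_gen N hgen a b (a * w)]
  simp

include hgen in
lemma bq_move (a b w : R) : bq N a (w * (a * b)) = bq N a (w * (b * a)) := by
  have h2 : bq N a (w * (a * b)) - bq N a (w * (b * a)) = 0 := by
    unfold bq
    rw [← map_sub]
    have h : a * (w * (a * b)) - w * (a * b) * a - (a * (w * (b * a)) - w * (b * a) * a)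
        = a * (w * (a * b - b * a)) - w * (a * b - b * a) * a := by noncomm_ring
    rw [h]
    have h3 := bq_core N hgen a b w
    unfold bq at h3
    exact h3
  exact sub_eq_zero.mp h2

include hgen in
lemma bq_pow : ∀ (k : ℕ) (a u : R), bq N (a ^ (k + 1)) u = (k + 1) • bq N a (a ^ k * u) := by
  intro k
  induction k with
  | zero => intro a u; simp
  | succ k ih =>
    intro a u
    rw [pow_succ' a (k + 1), bq_split N, ih a (u * a)]
    have h2 : bq N a (a ^ k * (u * a)) = bq N a (a ^ (k + 1) * u) := by
      rw [← mul_assoc, bq_rot N hgen a (a ^ k * u) a, ← mul_assoc, ← pow_succ']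
    rw [h2, succ_nsmul (bq N a (a ^ (k + 1) * u)) (k + 1)]
    exact add_comm _ _

include hgen in
lemma bq_Vb : ∀ (j : ℕ) (a b w : R), bq N (b ^ j) (w * (a * b - b * a)) = 0 := by
  intro j
  induction j with
  | zero => intro a b w; rw [pow_zero]; exact bq_one N _
  | succ j ih =>
    intro a b w
    rw [pow_succ' b j, bq_split N]
    have h1 : bq N b (b ^ j * (w * (a * b - b * a))) = 0 := by
      rw [← mul_assoc, show a * b - b * a = -(b * a - a * b) from by noncomm_ring, mul_neg,
        bq_neg_right, bq_core N hgen b a (b ^ j * w), neg_zero]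
    have h2 : bq N (b ^ j) (w * (a * b - b * a) * b) = 0 := by
      rw [bq_rot N hgen (b ^ j) (w * (a * b - b * a)) b, ← mul_assoc]
      exact ih a b (b * w)
    rw [h1, h2, zero_add]

include hgen in
lemma bq_V : ∀ (i j : ℕ) (a b w : R), bq N (a ^ i * b ^ j) (w * (a * b - b * a)) = 0 := by
  intro i
  induction i with
  | zero => intro j a b w; rw [pow_zero, one_mul]; exact bq_Vb N hgen j a b w
  | succ i ih =>
    intro j a b w
    rw [pow_succ' a i, mul_assoc, bq_split N]
    have h1 : bq N a (a ^ i * b ^ j * (w * (a * b - b * a))) = 0 := by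
      rw [← mul_assoc]
      exact bq_core N hgen a b (a ^ i * b ^ j * w)
    have h2 : bq N (a ^ i * b ^ j) (w * (a * b - b * a) * a) = 0 := by
      rw [bq_rot N hgen (a ^ i * b ^ j) (w * (a * b - b * a)) a, ← mul_assoc]
      exact ih j a b (a * w)
    rw [h1, h2, zero_add]

include hgen in
lemma main_s (s' q' r' : ℕ) (x y z : R) :
    (s' + 1) • bq N z (z ^ s' * x ^ q' * y ^ r' * (x * y - y * x)) = 0 := by
  have hU : bq N z (z ^ s' * x ^ q' * y ^ r' * (x * y - y * x))
      = - bq N (z ^ s' * x ^ q' * y ^ r') (z * (x * y - y * x)) :=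
    bq_swap N hgen z (z ^ s' * x ^ q' * y ^ r') x y
  have hsplit : bq N (z ^ s' * x ^ q' * y ^ r') (z * (x * y - y * x))
      = bq N (z ^ s') (x ^ q' * y ^ r' * (z * (x * y - y * x)))
        + bq N (x ^ q' * y ^ r') (z * (x * y - y * x) * z ^ s') := by
    rw [show (z ^ s' * x ^ q' * y ^ r' : R) = z ^ s' * (x ^ q' * y ^ r') from mul_assoc _ _ _]
    exact bq_split N _ _ _
  have h2 : bq N (x ^ q' * y ^ r') (z * (x * y - y * x) * z ^ s') = 0 := by
    rw [bq_rot N hgen (x ^ q' * y ^ r') (z * (x * y - y * x)) (z ^ s'), ← mul_assoc, ← pow_succ]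
    exact bq_V N hgen q' r' x y (z ^ (s' + 1))
  have h1 : bq N (z ^ s') (x ^ q' * y ^ r' * (z * (x * y - y * x)))
      = s' • bq N z (z ^ s' * x ^ q' * y ^ r' * (x * y - y * x)) := by
    cases s' with
    | zero => rw [pow_zero, bq_one, zero_nsmul]
    | succ k =>
      rw [bq_pow N hgen k z (x ^ q' * y ^ r' * (z * (x * y - y * x)))]
      congr 1
      rw [← mul_assoc, bq_move N hgen z (x * y - y * x) (z ^ k * (x ^ q' * y ^ r')),
        ← mul_assoc, bq_rot N hgen z (z ^ k * (x ^ q' * y ^ r') * (x * y - y * x)) z,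
        ← mul_assoc, ← mul_assoc, ← pow_succ', ← mul_assoc]
  rw [hsplit, h1, h2, add_zero] at hU
  rw [succ_nsmul]
  rw [eq_neg_iff_add_eq_zero] at hU
  rw [add_comm] at hU
  exact hU

include hgen in
lemma main_q (s' q' r' : ℕ) (x y z : R) :
    (q' + 1) • bq N x (z ^ s' * x ^ q' * y ^ r' * (y * z - z * y)) = 0 := by
  have hU : bq N x (z ^ s' * x ^ q' * y ^ r' * (y * z - z * y))
      = - bq N (z ^ s' * x ^ q' * y ^ r') (x * (y * z - z * y)) :=
    bq_swap N hgen x (z ^ s' * x ^ q' * y ^ r') y z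
  have hsplit : bq N (z ^ s' * x ^ q' * y ^ r') (x * (y * z - z * y))
      = bq N (z ^ s') (x ^ q' * y ^ r' * (x * (y * z - z * y)))
        + bq N (x ^ q' * y ^ r') (x * (y * z - z * y) * z ^ s') := by
    rw [show (z ^ s' * x ^ q' * y ^ r' : R) = z ^ s' * (x ^ q' * y ^ r') from mul_assoc _ _ _]
    exact bq_split N _ _ _
  have h1 : bq N (z ^ s') (x ^ q' * y ^ r' * (x * (y * z - z * y))) = 0 := by
    rw [show (x ^ q' * y ^ r' * (x * (y * z - z * y)) : R)
        = x ^ q' * y ^ r' * x * (y * z - z * y) from (mul_assoc _ _ _).symm,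
      show (z ^ s' : R) = y ^ 0 * z ^ s' from by rw [pow_zero, one_mul]]
    exact bq_V N hgen 0 s' y z (x ^ q' * y ^ r' * x)
  have hsplit2 : bq N (x ^ q' * y ^ r') (x * (y * z - z * y) * z ^ s')
      = bq N (x ^ q') (y ^ r' * (x * (y * z - z * y) * z ^ s'))
        + bq N (y ^ r') (x * (y * z - z * y) * z ^ s' * x ^ q') := bq_split N _ _ _
  have h3 : bq N (y ^ r') (x * (y * z - z * y) * z ^ s' * x ^ q') = 0 := by
    rw [mul_assoc (x * (y * z - z * y)) (z ^ s') (x ^ q'),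
      bq_rot N hgen (y ^ r') (x * (y * z - z * y)) (z ^ s' * x ^ q'),
      show (z ^ s' * x ^ q' * (x * (y * z - z * y)) : R)
        = z ^ s' * x ^ q' * x * (y * z - z * y) from (mul_assoc _ _ _).symm,
      show (y ^ r' : R) = y ^ r' * z ^ 0 from by rw [pow_zero, mul_one]]
    exact bq_V N hgen r' 0 y z (z ^ s' * x ^ q' * x)
  have h2 : bq N (x ^ q') (y ^ r' * (x * (y * z - z * y) * z ^ s'))
      = q' • bq N x (z ^ s' * x ^ q' * y ^ r' * (y * z - z * y)) := by
    cases q' with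
    | zero => rw [pow_zero, bq_one, zero_nsmul]
    | succ k =>
      rw [bq_pow N hgen k x (y ^ r' * (x * (y * z - z * y) * z ^ s'))]
      congr 1
      rw [← mul_assoc,
        show (x * (y * z - z * y) * z ^ s' : R) = x * ((y * z - z * y) * z ^ s') from
          mul_assoc _ _ _,
        bq_move N hgen x ((y * z - z * y) * z ^ s') (x ^ k * y ^ r'),
        ← mul_assoc,
        bq_rot N hgen x (x ^ k * y ^ r' * ((y * z - z * y) * z ^ s')) x,
        ← mul_assoc, ← mul_assoc x (x ^ k) (y ^ r'), ← pow_succ',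
        show (x ^ (k + 1) * y ^ r' * ((y * z - z * y) * z ^ s') : R)
          = x ^ (k + 1) * y ^ r' * (y * z - z * y) * z ^ s' from (mul_assoc _ _ _).symm,
        bq_rot N hgen x (x ^ (k + 1) * y ^ r' * (y * z - z * y)) (z ^ s'),
        ← mul_assoc, ← mul_assoc]
  rw [hsplit, h1, hsplit2, h2, h3, zero_add, add_zero] at hU
  rw [succ_nsmul]
  rw [eq_neg_iff_add_eq_zero] at hU
  rw [add_comm] at hU
  exact hU

include hgen in
lemma main_r (s' q' r' : ℕ) (x y z : R) :
    (r' + 1) • bq N y (z ^ s' * x ^ q' * y ^ r' * (z * x - x * z)) = 0 := by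
  have hU : bq N y (z ^ s' * x ^ q' * y ^ r' * (z * x - x * z))
      = - bq N (z ^ s' * x ^ q' * y ^ r') (y * (z * x - x * z)) :=
    bq_swap N hgen y (z ^ s' * x ^ q' * y ^ r') z x
  have hsplit : bq N (z ^ s' * x ^ q' * y ^ r') (y * (z * x - x * z))
      = bq N (z ^ s' * x ^ q') (y ^ r' * (y * (z * x - x * z)))
        + bq N (y ^ r') (y * (z * x - x * z) * (z ^ s' * x ^ q')) := bq_split N _ _ _
  have h1 : bq N (z ^ s' * x ^ q') (y ^ r' * (y * (z * x - x * z))) = 0 := by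
    rw [show (y ^ r' * (y * (z * x - x * z)) : R) = y ^ r' * y * (z * x - x * z) from
      (mul_assoc _ _ _).symm]
    exact bq_V N hgen s' q' z x (y ^ r' * y)
  have h2 : bq N (y ^ r') (y * (z * x - x * z) * (z ^ s' * x ^ q'))
      = r' • bq N y (z ^ s' * x ^ q' * y ^ r' * (z * x - x * z)) := by
    cases r' with
    | zero => rw [pow_zero, bq_one, zero_nsmul]
    | succ k =>
      rw [bq_pow N hgen k y (y * (z * x - x * z) * (z ^ s' * x ^ q'))]
      congr 1
      rw [show (y * (z * x - x * z) * (z ^ s' * x ^ q') : R)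
          = y * ((z * x - x * z) * (z ^ s' * x ^ q')) from mul_assoc _ _ _,
        bq_move N hgen y ((z * x - x * z) * (z ^ s' * x ^ q')) (y ^ k),
        ← mul_assoc,
        bq_rot N hgen y (y ^ k * ((z * x - x * z) * (z ^ s' * x ^ q'))) y,
        ← mul_assoc, ← pow_succ', ← mul_assoc,
        bq_rot N hgen y (y ^ (k + 1) * (z * x - x * z)) (z ^ s' * x ^ q'),
        ← mul_assoc]
  rw [hsplit, h1, h2, zero_add] at hU
  rw [succ_nsmul]
  rw [eq_neg_iff_add_eq_zero] at hU
  rw [add_comm] at hU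
  exact hU

include hgen in
lemma cross_U (P x y z : R) :
    bq N z (P * (x * y - y * x)) = bq N x (P * (y * z - z * y)) := by
  rw [bq_swap N hgen z P x y, bq_swap N hgen x P y z, neg_inj]
  have h2 : bq N P (z * (x * y - y * x)) - bq N P (x * (y * z - z * y)) = 0 := by
    unfold bq
    rw [← map_sub]
    have h : P * (z * (x * y - y * x)) - z * (x * y - y * x) * P
          - (P * (x * (y * z - z * y)) - x * (y * z - z * y) * P)
        = (P * (z * (x * y) - x * y * z) - (z * (x * y) - x * y * z) * P)
          + (P * (x * (z * y) - z * y * x) - (x * (z * y) - z * y * x) * P) := by noncomm_ring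
    rw [h, map_add, mk_gen N hgen P z (x * y), mk_gen N hgen P x (z * y), add_zero]
  exact sub_eq_zero.mp h2

include hgen in
lemma cross_W (P x y z : R) :
    bq N z (P * (x * y - y * x)) = bq N y (P * (z * x - x * z)) := by
  rw [bq_swap N hgen z P x y, bq_swap N hgen y P z x, neg_inj]
  have h2 : bq N P (z * (x * y - y * x)) - bq N P (y * (z * x - x * z)) = 0 := by
    unfold bq
    rw [← map_sub]
    have h : P * (z * (x * y - y * x)) - z * (x * y - y * x) * P
          - (P * (y * (z * x - x * z)) - y * (z * x - x * z) * P)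
        = (P * (z * x * y - y * (z * x)) - (z * x * y - y * (z * x)) * P)
          + (P * (y * x * z - z * (y * x)) - (y * x * z - z * (y * x)) * P) := by noncomm_ring
    rw [h, map_add, mk_gen N hgen P (z * x) y, mk_gen N hgen P (y * x) z, add_zero]
  exact sub_eq_zero.mp h2

lemma smul_combo {M : Type*} [AddCommGroup M] (t : M) (a b α β : ℤ)
    (ha : a • t = 0) (hb : b • t = 0) : (a * α + b * β) • t = 0 := by
  rw [add_smul, mul_comm a α, mul_smul, ha, smul_zero, mul_comm b β, mul_smul, hb, smul_zero,
    add_zero]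

end Stmt16Aux

open Stmt16Aux in
/-- In `A_3 = ℤ⟨x,y,z⟩`, for positive `s,q,r`, the element
`T(s,q,r) = [z, z^{s-1} x^{q-1} y^{r-1} [x,y]]` satisfies
`gcd(s,q,r) · T(s,q,r) ∈ L_3(A_3)`, the additive span of triple commutators; so `T(s,q,r)`
is a torsion element of `B_2 = L_2/L_3` of order dividing `gcd(s,q,r)`. -/
theorem stmt16 (s q r : ℕ) (hs : 0 < s) (hq : 0 < q) (hr : 0 < r) :
    let x := FreeAlgebra.ι ℤ (0 : Fin 3)
    let y := FreeAlgebra.ι ℤ (1 : Fin 3)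
    let z := FreeAlgebra.ι ℤ (2 : Fin 3)
    let w := z ^ (s - 1) * x ^ (q - 1) * y ^ (r - 1) * (x * y - y * x)
    (Nat.gcd s (Nat.gcd q r) : ℤ) • (z * w - w * z) ∈
      AddSubgroup.closure
        {u : FreeAlgebra ℤ (Fin 3) | ∃ a b c, u = a * (b * c - c * b) - (b * c - c * b) * a} := by
  obtain ⟨s', rfl⟩ : ∃ t, s = t + 1 := ⟨s - 1, (Nat.succ_pred_eq_of_pos hs).symm⟩
  obtain ⟨q', rfl⟩ : ∃ t, q = t + 1 := ⟨q - 1, (Nat.succ_pred_eq_of_pos hq).symm⟩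
  obtain ⟨r', rfl⟩ : ∃ t, r = t + 1 := ⟨r - 1, (Nat.succ_pred_eq_of_pos hr).symm⟩
  intro x y z w
  set N : AddSubgroup (FreeAlgebra ℤ (Fin 3)) := AddSubgroup.closure
      {u : FreeAlgebra ℤ (Fin 3) | ∃ a b c, u = a * (b * c - c * b) - (b * c - c * b) * a}
    with hN
  have hgen : ∀ a b c : FreeAlgebra ℤ (Fin 3),
      a * (b * c - c * b) - (b * c - c * b) * a ∈ N :=
    fun a b c => AddSubgroup.subset_closure ⟨a, b, c, rfl⟩
  rw [← QuotientAddGroup.ker_mk' N, AddMonoidHom.mem_ker, map_zsmul]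
  have hT : QuotientAddGroup.mk' N (z * w - w * z)
      = bq N z (z ^ s' * x ^ q' * y ^ r' * (x * y - y * x)) := rfl
  rw [hT]
  have hsT : ((s' + 1 : ℕ) : ℤ) • bq N z (z ^ s' * x ^ q' * y ^ r' * (x * y - y * x)) = 0 := by
    rw [natCast_zsmul]
    exact main_s N hgen s' q' r' x y z
  have hqT : ((q' + 1 : ℕ) : ℤ) • bq N z (z ^ s' * x ^ q' * y ^ r' * (x * y - y * x)) = 0 := by
    rw [natCast_zsmul, cross_U N hgen (z ^ s' * x ^ q' * y ^ r') x y z]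
    exact main_q N hgen s' q' r' x y z
  have hrT : ((r' + 1 : ℕ) : ℤ) • bq N z (z ^ s' * x ^ q' * y ^ r' * (x * y - y * x)) = 0 := by
    rw [natCast_zsmul, cross_W N hgen (z ^ s' * x ^ q' * y ^ r') x y z]
    exact main_r N hgen s' q' r' x y z
  have hg1 : ((Nat.gcd (q' + 1) (r' + 1) : ℕ) : ℤ)
      • bq N z (z ^ s' * x ^ q' * y ^ r' * (x * y - y * x)) = 0 := by
    rw [Nat.gcd_eq_gcd_ab]
    exact smul_combo _ _ _ _ _ hqT hrT
  rw [Nat.gcd_eq_gcd_ab]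
  exact smul_combo _ _ _ _ _ hsT hg1
end

section
/- Let A = F⟨x_1, ..., x_n⟩ be the free associative algebra over a field F, with lower central series L_1 = A, L_{i+1} = [A, L_i]. If for some r, L_i = [A_{≤r}, L_{i-1}] where A_{≤r} is the span of words of degree at most r, then L_{i+1} = [A_{≤ 2r+1}, L_i]. Consequently, by induction, L_{i+1} = [A_{≤ 2^i - 1}, L_i] for all i ≥ 1. -/
/-- `[S, T]`: the span of commutators `[s,t]` with `s ∈ S`, `t ∈ T`. -/
def brk (F : Type*) [CommRing F] (A : Type*) [Ring A] [Algebra F A]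
    (S T : Submodule F A) : Submodule F A :=
  Submodule.span F {u : A | ∃ s ∈ S, ∃ t ∈ T, u = s * t - t * s}

/-- `A_{≤r}`: the span of monomials of degree at most `r` in the free algebra. -/
def Adeg (F : Type*) [Field F] (n r : ℕ) : Submodule F (FreeAlgebra F (Fin n)) :=
  Submodule.span F {u : FreeAlgebra F (Fin n) | ∃ w : List (Fin n), w.length ≤ r ∧
    u = (w.map (FreeAlgebra.ι F)).prod}

namespace Stmt18

variable (F : Type*) [Field F] (n : ℕ)

local notation "A" => FreeAlgebra F (Fin n)

def mon (w : List (Fin n)) : A := (w.map (FreeAlgebra.ι F)).prod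

lemma lcs_zero : lcs F A 0 = ⊤ := rfl

lemma lcs_succ (k : ℕ) :
    lcs F A (k+1) =
      Submodule.span F {u : A | ∃ a : A, ∃ l ∈ lcs F A k, u = a * l - l * a} := rfl

lemma mem_brk {S T : Submodule F A} {s t : A} (hs : s ∈ S) (ht : t ∈ T) :
    s * t - t * s ∈ brk F A S T :=
  Submodule.subset_span ⟨s, hs, t, ht, rfl⟩

lemma mem_lcs_succ {k : ℕ} (a : A) {l : A} (hl : l ∈ lcs F A k) :
    a * l - l * a ∈ lcs F A (k+1) := by
  rw [lcs_succ]
  exact Submodule.subset_span ⟨a, l, hl, rfl⟩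

lemma span_lin {S : Set A} {M : Submodule F A} (φ : A →ₗ[F] A) {x : A}
    (hx : x ∈ Submodule.span F S) (h : ∀ y ∈ S, φ y ∈ M) : φ x ∈ M := by
  have h2 : Submodule.span F S ≤ M.comap φ :=
    Submodule.span_le.mpr (fun y hy => Submodule.mem_comap.mpr (h y hy))
  exact Submodule.mem_comap.mp (h2 hx)

lemma comm_mem_left {S : Set A} {M : Submodule F A} {x t : A}
    (hx : x ∈ Submodule.span F S) (h : ∀ y ∈ S, y * t - t * y ∈ M) :
    x * t - t * x ∈ M := by
  have := span_lin F n (LinearMap.mulRight F t - LinearMap.mulLeft F t) hx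
    (fun y hy => by simpa using h y hy)
  simpa using this

lemma comm_mem_right {S : Set A} {M : Submodule F A} {a x : A}
    (hx : x ∈ Submodule.span F S) (h : ∀ y ∈ S, a * y - y * a ∈ M) :
    a * x - x * a ∈ M := by
  have := span_lin F n (LinearMap.mulLeft F a - LinearMap.mulRight F a) hx
    (fun y hy => by simpa using h y hy)
  simpa using this

lemma comm2_mem {S : Set A} {M : Submodule F A} {W d x : A}
    (hx : x ∈ Submodule.span F S)
    (h : ∀ y ∈ S, W * (y * d - d * y) - (y * d - d * y) * W ∈ M) :
    W * (x * d - d * x) - (x * d - d * x) * W ∈ M := by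
  have := span_lin F n ((LinearMap.mulLeft F W - LinearMap.mulRight F W).comp
    (LinearMap.mulRight F d - LinearMap.mulLeft F d)) hx
    (fun y hy => by simpa using h y hy)
  simpa using this

lemma mon_mem_Adeg {w : List (Fin n)} {r : ℕ} (h : w.length ≤ r) :
    mon F n w ∈ Adeg F n r :=
  Submodule.subset_span ⟨w, h, rfl⟩

lemma mon_append (w₁ w₂ : List (Fin n)) :
    mon F n (w₁ ++ w₂) = mon F n w₁ * mon F n w₂ := by
  simp [mon]

lemma top_span (x : A) :
    x ∈ Submodule.span F {u : A | ∃ w : List (Fin n), u = mon F n w} := by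
  induction x using FreeAlgebra.induction with
  | grade0 r =>
      rw [Algebra.algebraMap_eq_smul_one]
      exact Submodule.smul_mem _ r (Submodule.subset_span ⟨[], by simp [mon]⟩)
  | grade1 i => exact Submodule.subset_span ⟨[i], by simp [mon]⟩
  | mul a b ha hb =>
      have h2 := Submodule.mul_mem_mul ha hb
      rw [Submodule.span_mul_span] at h2
      refine Submodule.span_mono ?_ h2
      rintro u ⟨u1, ⟨w1, rfl⟩, u2, ⟨w2, rfl⟩, rfl⟩
      exact ⟨w1 ++ w2, (mon_append F n w1 w2).symm⟩
  | add a b ha hb => exact Submodule.add_mem _ ha hb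

lemma id_base (a X M : A) :
    a * (X * M) - (X * M) * a =
      ((a * X) * M - M * (a * X)) - (X * (M * a) - (M * a) * X) := by
  noncomm_ring

lemma id_key (a b c d : A) :
    (a * b) * (c * d - d * c) - (c * d - d * c) * (a * b) =
      (c * ((a * b) * d - d * (a * b)) - ((a * b) * d - d * (a * b)) * c)
      + (a * ((b * c) * d - d * (b * c)) - ((b * c) * d - d * (b * c)) * a)
      + (b * ((c * a) * d - d * (c * a)) - ((c * a) * d - d * (c * a)) * b)
      - ((b * c) * (a * d - d * a) - (a * d - d * a) * (b * c))
      - ((c * a) * (b * d - d * b) - (b * d - d * b) * (c * a)) := by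
  noncomm_ring


lemma base_claim (a : A) (w : List (Fin n)) :
    a * mon F n w - mon F n w * a ∈ brk F A (Adeg F n 1) (lcs F A 0) := by
  induction w generalizing a with
  | nil =>
      simp [mon]
  | cons x w ih =>
      have hcons : mon F n (x :: w) = FreeAlgebra.ι F x * mon F n w := by simp [mon]
      rw [hcons, id_base]
      refine Submodule.sub_mem _ (ih (a * FreeAlgebra.ι F x)) ?_
      have hx : FreeAlgebra.ι F x ∈ Adeg F n 1 := by
        simpa [mon] using mon_mem_Adeg F n (w := [x]) (r := 1) (by simp)
      have ht : mon F n w * a ∈ lcs F A 0 := by rw [lcs_zero]; trivial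
      exact mem_brk F n hx ht

lemma base : lcs F A 1 = brk F A (Adeg F n 1) (lcs F A 0) := by
  refine le_antisymm ?_ ?_
  · rw [lcs_succ, Submodule.span_le]
    rintro u ⟨a, l, -, rfl⟩
    refine comm_mem_right F n (top_span F n l) ?_
    rintro y ⟨w, rfl⟩
    exact base_claim F n a w
  · rw [brk, Submodule.span_le]
    rintro u ⟨s, -, t, ht, rfl⟩
    exact mem_lcs_succ F n s ht

lemma main_claim (i r : ℕ)
    (H : lcs F A (i+1) = brk F A (Adeg F n r) (lcs F A i)) :
    ∀ m : ℕ, ∀ w : List (Fin n), w.length = m → ∀ t ∈ lcs F A (i+1),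
      mon F n w * t - t * mon F n w ∈ brk F A (Adeg F n (2*r+1)) (lcs F A (i+1)) := by
  intro m
  induction m using Nat.strong_induction_on with
  | _ m IH =>
  intro w hw t ht
  by_cases hm : m ≤ 2 * r + 1
  · exact mem_brk F n (mon_mem_Adeg F n (hw ▸ hm)) ht
  push_neg at hm
  rw [H, brk] at ht
  refine comm_mem_right F n ht ?_
  rintro y ⟨c, hc, d, hd, rfl⟩
  rw [Adeg] at hc
  refine comm2_mem F n hc ?_
  rintro y ⟨v, hv, rfl⟩
  have hsplit : w = w.take (r+1) ++ w.drop (r+1) := (List.take_append_drop _ _).symm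
  set w₁ := w.take (r+1) with hw₁
  set w₂ := w.drop (r+1) with hw₂
  have h1 : w₁.length = r + 1 := by
    rw [hw₁, List.length_take, hw]; omega
  have h2 : w₂.length = m - (r+1) := by rw [hw₂, List.length_drop, hw]
  have hvmon : (v.map (FreeAlgebra.ι F)).prod = mon F n v := rfl
  rw [hvmon, hsplit, mon_append, id_key]
  refine Submodule.sub_mem _ (Submodule.sub_mem _ (Submodule.add_mem _ (Submodule.add_mem _
    ?_ ?_) ?_) ?_) ?_
  · -- [c, [ab, d]]
    exact mem_brk F n (mon_mem_Adeg F n (by omega)) (mem_lcs_succ F n _ hd)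
  · -- [a, [bc, d]]
    exact mem_brk F n (mon_mem_Adeg F n (by omega)) (mem_lcs_succ F n _ hd)
  · -- [b, [ca, d]]
    exact IH w₂.length (by omega) w₂ rfl _ (mem_lcs_succ F n _ hd)
  · -- [bc, [a, d]]
    have hlen : (w₂ ++ v).length < m := by
      rw [List.length_append]; omega
    have h3 := IH (w₂ ++ v).length hlen (w₂ ++ v) rfl _
      (mem_lcs_succ F n (mon F n w₁) hd)
    rwa [mon_append] at h3
  · -- [ca, [b, d]]
    have hca : (v ++ w₁).length ≤ 2*r+1 := by
      rw [List.length_append]; omega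
    have h3 := mem_brk F n (mon_mem_Adeg F n hca) (mem_lcs_succ F n (mon F n w₂) hd)
    rwa [mon_append] at h3

lemma main_step (i r : ℕ)
    (H : lcs F A (i+1) = brk F A (Adeg F n r) (lcs F A i)) :
    lcs F A (i+2) = brk F A (Adeg F n (2*r+1)) (lcs F A (i+1)) := by
  refine le_antisymm ?_ ?_
  · rw [show i+2 = (i+1)+1 from rfl, lcs_succ, Submodule.span_le]
    rintro u ⟨a, l, hl, rfl⟩
    refine comm_mem_left F n (top_span F n a) ?_
    rintro y ⟨w, rfl⟩
    exact main_claim F n i r H w.length w rfl l hl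
  · rw [brk, Submodule.span_le]
    rintro u ⟨s, -, t, ht, rfl⟩
    exact mem_lcs_succ F n s ht

end Stmt18

/-- In the free algebra `A = F⟨x_1,...,x_n⟩` over a field: if `L_i = [A_{≤r}, L_{i-1}]`
then `L_{i+1} = [A_{≤2r+1}, L_i]`; consequently, by induction,
`L_{i+1} = [A_{≤2^i - 1}, L_i]` for all `i ≥ 1`.  (Here `lcs F _ k = L_{k+1}`.) -/
theorem stmt18 (F : Type*) [Field F] (n : ℕ) :
    (∀ i r : ℕ,
      lcs F (FreeAlgebra F (Fin n)) (i + 1) =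
        brk F (FreeAlgebra F (Fin n)) (Adeg F n r) (lcs F (FreeAlgebra F (Fin n)) i) →
      lcs F (FreeAlgebra F (Fin n)) (i + 2) =
        brk F (FreeAlgebra F (Fin n)) (Adeg F n (2 * r + 1))
          (lcs F (FreeAlgebra F (Fin n)) (i + 1))) ∧
    (∀ i : ℕ,
      lcs F (FreeAlgebra F (Fin n)) (i + 1) =
        brk F (FreeAlgebra F (Fin n)) (Adeg F n (2 ^ (i + 1) - 1))
          (lcs F (FreeAlgebra F (Fin n)) i)) := by
  constructor
  · intro i r H
    exact Stmt18.main_step F n i r H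
  · intro i
    induction i with
    | zero => simpa using Stmt18.base F n
    | succ i ih =>
        have h := Stmt18.main_step F n i (2^(i+1)-1) ih
        have harith : 2*(2^(i+1)-1)+1 = 2^(i+1+1)-1 := by
          have h1 : 1 ≤ 2^(i+1) := Nat.one_le_two_pow
          have h2 : 2^(i+1+1) = 2^(i+1)*2 := pow_succ 2 (i+1)
          omega
        rwa [harith] at h
end
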